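/- arXiv:2603.17785 — 5 statements merged into one kernel-verified Lean document; each statement's English description precedes it below -/
import Mathlib

section
/- Given n ≥ 1 nonzero vectors x¹,…,xⁿ ∈ ℝ^d, the number of distinct binary vectors π ∈ {0,1}ⁿ such that the open region R_π = ∩_{i=1}^n {w ∈ ℝ^d : (2π_i − 1)⟨w, x^i⟩ > 0} is non-empty is at most 2 Σ_{k=0}^{d-1} C(n−1, k). -/
open RealInnerProductSpace

private def Rz {E : Type} [NormedAddCommGroup E] [InnerProductSpace ℝ E] {m : ℕ}
    (x : Fin m → E) (π : Fin m → Bool) : Prop :=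
  ∃ w : E, ∀ i, if π i then 0 < ⟪w, x i⟫ else ⟪w, x i⟫ < 0

private lemma rz_empty {E : Type} [NormedAddCommGroup E] [InnerProductSpace ℝ E] {m : ℕ}
    (x : Fin m → E) (i : Fin m) (hxi : x i = 0) (π : Fin m → Bool) : ¬ Rz x π := by
  rintro ⟨w, h⟩
  have := h i
  rw [hxi, inner_zero_right] at this
  split_ifs at this <;> exact lt_irrefl 0 this

private lemma pascal_sum (n e : ℕ) :
    ∑ k ∈ Finset.range (e + 1), n.choose k + ∑ k ∈ Finset.range e, n.choose k
      = ∑ k ∈ Finset.range (e + 1), (n + 1).choose k := by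
  induction e with
  | zero => simp
  | succ e ih =>
    rw [Finset.sum_range_succ (f := fun k => (n+1).choose k), ← ih,
      Nat.choose_succ_succ,
      Finset.sum_range_succ (f := fun k => n.choose k) (n := e + 1),
      Finset.sum_range_succ (f := fun k => n.choose k) (n := e)]
    ring

private lemma cover_key (n : ℕ) :
    ∀ (E : Type) [NormedAddCommGroup E] [InnerProductSpace ℝ E] [FiniteDimensional ℝ E]
      (x : Fin (n + 1) → E),
      {π : Fin (n + 1) → Bool | Rz x π}.ncard
        ≤ 2 * ∑ k ∈ Finset.range (Module.finrank ℝ E), n.choose k := by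
  induction n with
  | zero =>
    intro E _ _ _ x
    rcases Nat.eq_zero_or_pos (Module.finrank ℝ E) with h0 | hpos
    · have : Subsingleton E := Module.finrank_zero_iff.mp h0
      have hx0 : x 0 = 0 := Subsingleton.elim _ _
      have : {π : Fin 1 → Bool | Rz x π} = ∅ := by
        ext π; simpa using rz_empty x 0 hx0 π
      simp [this]
    · calc {π : Fin 1 → Bool | Rz x π}.ncard ≤ Nat.card (Fin 1 → Bool) :=
            Set.ncard_le_ncard (Set.subset_univ _) (Set.finite_univ) |>.trans
              (by simp [Set.ncard_univ])
        _ = 2 := by simp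
        _ ≤ 2 * ∑ k ∈ Finset.range (Module.finrank ℝ E), Nat.choose 0 k := by
            obtain ⟨e, he⟩ := Nat.exists_eq_add_of_lt hpos
            rw [he]
            have : 1 ≤ ∑ k ∈ Finset.range (0 + e + 1), Nat.choose 0 k := by
              calc 1 = Nat.choose 0 0 := by simp
                _ ≤ _ := Finset.single_le_sum (f := fun k => Nat.choose 0 k)
                    (by intro i _; exact Nat.zero_le _) (by simp)
            omega
  | succ n ih =>
    intro E _ _ _ x
    classical
    by_cases hlast : x (Fin.last (n + 1)) = 0
    · have : {π : Fin (n + 2) → Bool | Rz x π} = ∅ := by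
        ext π; simpa using rz_empty x _ hlast π
      simp [this]
    · have : Nontrivial E := nontrivial_of_ne _ _ hlast
      obtain ⟨e, he⟩ := Nat.exists_eq_add_of_lt (Module.finrank_pos (R := ℝ) (M := E))
      rw [zero_add] at he
      haveI : Fact (Module.finrank ℝ E = e + 1) := ⟨he⟩
      set H := (ℝ ∙ x (Fin.last (n + 1)))ᗮ with hHdef
      have hH : Module.finrank ℝ H = e := Submodule.finrank_orthogonal_span_singleton hlast
      set y : Fin (n + 1) → H := fun i => H.orthogonalProjectionOnto (x i.castSucc) with hy
      obtain ⟨P, hP⟩ : ∃ P : Finset (Fin (n + 2) → Bool),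
          P = Finset.univ.filter (fun π => Rz x π) := ⟨_, rfl⟩
      obtain ⟨P', hP'⟩ : ∃ P' : Finset (Fin (n + 1) → Bool),
          P' = Finset.univ.filter (fun π => Rz (x ∘ Fin.castSucc) π) := ⟨_, rfl⟩
      obtain ⟨D, hD⟩ : ∃ D : Finset (Fin (n + 1) → Bool),
          D = Finset.univ.filter (fun π => Rz y π) := ⟨_, rfl⟩
      -- the core geometric step
      have hboth : ∀ b : Fin (n + 1) → Bool,
          Rz x (Fin.snoc b true) → Rz x (Fin.snoc b false) → Rz y b := by
        intro b ⟨wp, hp⟩ ⟨wm, hm⟩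
        have hpl := hp (Fin.last (n + 1))
        have hml := hm (Fin.last (n + 1))
        rw [Fin.snoc_last] at hpl hml
        rw [if_pos rfl] at hpl
        rw [if_neg (by simp)] at hml
        obtain ⟨a, ha⟩ : ∃ a : ℝ, a = ⟪wp, x (Fin.last (n + 1))⟫ := ⟨_, rfl⟩
        obtain ⟨c, hc⟩ : ∃ c : ℝ, c = ⟪wm, x (Fin.last (n + 1))⟫ := ⟨_, rfl⟩
        rw [← ha] at hpl
        rw [← hc] at hml
        set w : E := (-c) • wp + a • wm with hw
        have hwH : w ∈ H := by
          rw [hHdef, Submodule.mem_orthogonal_singleton_iff_inner_right]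
          have h1 : ⟪x (Fin.last (n + 1)), wp⟫ = a := by rw [ha, real_inner_comm]
          have h2 : ⟪x (Fin.last (n + 1)), wm⟫ = c := by rw [hc, real_inner_comm]
          rw [hw, inner_add_right, real_inner_smul_right, real_inner_smul_right, h1, h2]
          ring
        refine ⟨⟨w, hwH⟩, fun i => ?_⟩
        have hkey : ⟪(⟨w, hwH⟩ : H), y i⟫
            = (-c) * ⟪wp, x i.castSucc⟫ + a * ⟪wm, x i.castSucc⟫ := by
          have h1 : ⟪(⟨w, hwH⟩ : H), y i⟫ = ⟪w, (y i : E)⟫ := rfl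
          have h2 : ⟪x i.castSucc - (H.orthogonalProjectionOnto (x i.castSucc) : E), w⟫ = 0 :=
            Submodule.starProjection_inner_eq_zero (x i.castSucc) w hwH
          rw [inner_sub_left] at h2
          have h3 : ⟪w, (y i : E)⟫ = ⟪w, x i.castSucc⟫ := by
            rw [real_inner_comm, hy, real_inner_comm (x i.castSucc) w]
            linarith
          rw [h1, h3, hw, inner_add_left, real_inner_smul_left, real_inner_smul_left]
        have hpi := hp i.castSucc
        have hmi := hm i.castSucc
        rw [Fin.snoc_castSucc] at hpi hmi
        cases hbi : b i
        · rw [hbi] at hpi hmi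
          rw [if_neg (by simp)] at hpi hmi ⊢
          rw [hkey]
          nlinarith
        · rw [hbi] at hpi hmi
          rw [if_pos rfl] at hpi hmi ⊢
          rw [hkey]
          nlinarith
      -- counting
      have hset : {π : Fin (n + 2) → Bool | Rz x π} = ↑P := by
        ext π; simp [hP]
      rw [hset, Set.ncard_coe_finset]
      obtain ⟨r, hr⟩ : ∃ r : (Fin (n + 2) → Bool) → (Fin (n + 1) → Bool),
          r = fun π => π ∘ Fin.castSucc := ⟨_, rfl⟩
      have hcount : P.card ≤ P'.card + D.card := by
        rw [Finset.card_eq_sum_card_image r P]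
        have hfib : ∀ b ∈ P.image r,
            (P.filter (fun π => r π = b)).card ≤ 1 + (if Rz y b then 1 else 0) := by
          intro b _
          have hrep : ∀ π ∈ P.filter (fun π => r π = b),
              π = Fin.snoc b (π (Fin.last (n + 1))) := by
            intro π hπ
            have hπ2 := (Finset.mem_filter.mp hπ).2
            have h := Fin.snoc_init_self π
            rw [← hπ2, hr]
            exact h.symm
          by_cases hb2 : Fin.snoc b true ∈ P ∧ Fin.snoc b false ∈ P
          · have : Rz y b := by
              refine hboth b ?_ ?_
              · have := hb2.1; rw [hP, Finset.mem_filter] at this; exact this.2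
              · have := hb2.2; rw [hP, Finset.mem_filter] at this; exact this.2
            rw [if_pos this]
            have : (P.filter (fun π => r π = b)).card ≤ (Finset.univ : Finset Bool).card := by
              apply Finset.card_le_card_of_injOn (fun π => π (Fin.last (n + 1)))
                (fun _ _ => Finset.mem_univ _)
              intro π hπ π' hπ' hee
              have hee' : π (Fin.last (n + 1)) = π' (Fin.last (n + 1)) := hee
              rw [hrep π hπ, hrep π' hπ', hee']
            simpa using this
          · have hone : ∀ π ∈ P.filter (fun π => r π = b),
                ∀ π' ∈ P.filter (fun π => r π = b), π = π' := by
              intro π hπ π' hπ'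
              have hπP := (Finset.mem_filter.mp hπ).1
              have hπ'P := (Finset.mem_filter.mp hπ').1
              have e1 := hrep π hπ
              have e2 := hrep π' hπ'
              rw [e1] at hπP
              rw [e2] at hπ'P
              cases h1 : π (Fin.last (n + 1)) <;> cases h2 : π' (Fin.last (n + 1)) <;>
                rw [h1] at hπP e1 <;> rw [h2] at hπ'P e2
              · rw [e1, e2]
              · exact absurd ⟨hπ'P, hπP⟩ hb2
              · exact absurd ⟨hπP, hπ'P⟩ hb2
              · rw [e1, e2]
            have := Finset.card_le_one.mpr hone
            omega
        calc ∑ b ∈ P.image r, (P.filter (fun π => r π = b)).card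
            ≤ ∑ b ∈ P.image r, (1 + (if Rz y b then 1 else 0)) :=
              Finset.sum_le_sum hfib
          _ = (P.image r).card + ∑ b ∈ P.image r, (if Rz y b then 1 else 0) := by
              rw [Finset.sum_add_distrib]; simp
          _ ≤ P'.card + D.card := by
              gcongr
              · intro b hb
                rw [Finset.mem_image] at hb
                obtain ⟨π, hπ, rfl⟩ := hb
                rw [hP, Finset.mem_filter] at hπ
                obtain ⟨w, hw⟩ := hπ.2
                rw [hP', Finset.mem_filter]
                simp only [hr]
                exact ⟨Finset.mem_univ _, w, fun i => hw i.castSucc⟩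
              · rw [Finset.sum_boole]
                push_cast
                apply Finset.card_le_card
                intro b hb
                rw [Finset.mem_filter] at hb
                rw [hD, Finset.mem_filter]
                exact ⟨Finset.mem_univ _, hb.2⟩
      have hP'card : P'.card ≤ 2 * ∑ k ∈ Finset.range (e + 1), n.choose k := by
        have := ih E (x ∘ Fin.castSucc)
        rw [he] at this
        have hseteq : {π : Fin (n + 1) → Bool | Rz (x ∘ Fin.castSucc) π} = ↑P' := by
          ext π; simp [hP']
        rwa [hseteq, Set.ncard_coe_finset] at this
      have hDcard : D.card ≤ 2 * ∑ k ∈ Finset.range e, n.choose k := by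
        have := ih H y
        rw [hH] at this
        have hseteq : {π : Fin (n + 1) → Bool | Rz y π} = ↑D := by
          ext π; simp [hD]
        rwa [hseteq, Set.ncard_coe_finset] at this
      rw [he]
      calc P.card ≤ P'.card + D.card := hcount
        _ ≤ 2 * ∑ k ∈ Finset.range (e + 1), n.choose k
              + 2 * ∑ k ∈ Finset.range e, n.choose k := by omega
        _ = 2 * ∑ k ∈ Finset.range (e + 1), (n + 1).choose k := by
            rw [← pascal_sum]; ring

/-- Cover's bound: the number of sign patterns `π ∈ {0,1}ⁿ` whose open dual region
`R_π = ∩_i {w : (2π_i − 1)⟨w,x^i⟩ > 0}` is non-empty is at most `2 Σ_{k=0}^{d-1} C(n−1,k)`. -/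
theorem stmt6 (d n : ℕ) (hn : 1 ≤ n) (x : Fin n → EuclideanSpace ℝ (Fin d))
    (hx : ∀ i, x i ≠ 0) :
    Set.ncard {π : Fin n → Bool | ∃ w : EuclideanSpace ℝ (Fin d),
        ∀ i, if π i then 0 < ⟪w, x i⟫ else ⟪w, x i⟫ < 0}
      ≤ 2 * ∑ k ∈ Finset.range d, (n - 1).choose k := by
  obtain ⟨m, rfl⟩ : ∃ m, n = m + 1 := ⟨n - 1, by omega⟩
  have := cover_key m (EuclideanSpace ℝ (Fin d)) x
  rw [finrank_euclideanSpace_fin] at this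
  simpa [Rz] using this
end

section
/- Let A ∈ {0,1}^{N×N} be a 0-1 matrix such that perm(A) = |det(A)| and det(A) ≠ 0, and let B ∈ ℝ^{N×N} be a matrix such that B_{ij} > 0 whenever A_{ij} = 1. Then det(A ⊙ B) ≠ 0, where A ⊙ B denotes the Hadamard (entrywise) product. -/
/-- The permanent of a square real matrix. -/
noncomputable def Matrix.perm' {N : ℕ} (A : Matrix (Fin N) (Fin N) ℝ) : ℝ :=
  ∑ p : Equiv.Perm (Fin N), ∏ i, A i (p i)

/-- If a 0-1 matrix `A` satisfies `perm(A) = |det(A)|` and `det(A) ≠ 0`, and `B` has strictly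
positive entries wherever `A` has a `1`, then the Hadamard product `A ⊙ B` has nonzero
determinant. -/
theorem stmt9 {N : ℕ} (A B : Matrix (Fin N) (Fin N) ℝ)
    (hA01 : ∀ i j, A i j = 0 ∨ A i j = 1)
    (hperm : Matrix.perm' A = |A.det|) (hdet : A.det ≠ 0)
    (hB : ∀ i j, A i j = 1 → 0 < B i j) :
    (Matrix.hadamard A B).det ≠ 0 := by
  classical
  set S : Finset (Equiv.Perm (Fin N)) :=
    Finset.univ.filter (fun p => ∀ i, A i (p i) = 1) with hS
  have hprod : ∀ p : Equiv.Perm (Fin N), (∏ i, A i (p i)) = if p ∈ S then 1 else 0 := by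
    intro p
    by_cases h : p ∈ S
    · rw [if_pos h]
      simp only [hS, Finset.mem_filter, Finset.mem_univ, true_and] at h
      simp [h]
    · rw [if_neg h]
      simp only [hS, Finset.mem_filter, Finset.mem_univ, true_and, not_forall] at h
      obtain ⟨i, hi⟩ := h
      exact Finset.prod_eq_zero (Finset.mem_univ i) ((hA01 i (p i)).resolve_right hi)
  have hperm' : Matrix.perm' A = (S.card : ℝ) := by
    unfold Matrix.perm'
    rw [Finset.sum_congr rfl fun p _ => hprod p]
    simp
  -- determinant expansion along rows
  have hdet_expand : ∀ M : Matrix (Fin N) (Fin N) ℝ,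
      M.det = ∑ p : Equiv.Perm (Fin N),
        ((Equiv.Perm.sign p : ℤ) : ℝ) * ∏ i, M i (p i) := by
    intro M
    rw [← Matrix.det_transpose M, Matrix.det_apply']
    simp [Matrix.transpose_apply, Equiv.Perm.sign_eq_sign_of_equiv]
  have hdetA : A.det = ∑ p ∈ S, ((Equiv.Perm.sign p : ℤ) : ℝ) := by
    rw [hdet_expand A]
    rw [← Finset.sum_subset (Finset.subset_univ S)]
    · refine Finset.sum_congr rfl fun p hp => ?_
      rw [hprod p, if_pos hp, mul_one]
    · intro p _ hp
      rw [hprod p, if_neg hp, mul_zero]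
  set σ : ℝ := if 0 < A.det then 1 else -1 with hσdef
  have hσ2 : σ * σ = 1 := by
    rcases ite_eq_or_eq (0 < A.det) (1:ℝ) (-1) with h | h <;> rw [hσdef, h] <;> ring
  have hσdet : σ * A.det = |A.det| := by
    by_cases h : 0 < A.det
    · rw [hσdef, if_pos h, abs_of_pos h, one_mul]
    · have hlt : A.det < 0 := lt_of_le_of_ne (not_lt.mp h) hdet
      rw [hσdef, if_neg h, abs_of_neg hlt]; ring
  have hsum0 : ∑ p ∈ S, (1 - σ * ((Equiv.Perm.sign p : ℤ) : ℝ)) = 0 := by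
    rw [Finset.sum_sub_distrib, ← Finset.mul_sum, ← hdetA, Finset.sum_const, nsmul_eq_mul,
      mul_one, hσdet, ← hperm', hperm, sub_self]
  have hsign : ∀ p ∈ S, ((Equiv.Perm.sign p : ℤ) : ℝ) = σ := by
    have hnonneg : ∀ p ∈ S, 0 ≤ 1 - σ * ((Equiv.Perm.sign p : ℤ) : ℝ) := by
      intro p _
      have h1 : σ * ((Equiv.Perm.sign p : ℤ) : ℝ) ≤ 1 := by
        rcases Int.units_eq_one_or (Equiv.Perm.sign p) with h | h <;>
          rcases ite_eq_or_eq (0 < A.det) (1:ℝ) (-1) with h' | h' <;>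
          rw [h, hσdef, h'] <;> norm_num
      linarith
    intro p hp
    have := (Finset.sum_eq_zero_iff_of_nonneg hnonneg).mp hsum0 p hp
    have h1 : σ * ((Equiv.Perm.sign p : ℤ) : ℝ) = 1 := by linarith
    calc ((Equiv.Perm.sign p : ℤ) : ℝ) = σ * σ * ((Equiv.Perm.sign p : ℤ) : ℝ) := by
          rw [hσ2, one_mul]
      _ = σ * (σ * ((Equiv.Perm.sign p : ℤ) : ℝ)) := by ring
      _ = σ := by rw [h1, mul_one]
  have hSne : S.Nonempty := by
    by_contra h
    rw [Finset.not_nonempty_iff_eq_empty] at h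
    rw [h, Finset.sum_empty] at hdetA
    exact hdet hdetA
  have hexp : (Matrix.hadamard A B).det = σ * ∑ p ∈ S, ∏ i, B i (p i) := by
    rw [hdet_expand, ← Finset.sum_subset (Finset.subset_univ S), Finset.mul_sum]
    · refine Finset.sum_congr rfl fun p hp => ?_
      have hA1 : ∀ i, A i (p i) = 1 := by
        simpa [hS, Finset.mem_filter] using hp
      rw [hsign p hp]
      congr 1
      refine Finset.prod_congr rfl fun i _ => ?_
      rw [Matrix.hadamard_apply, hA1 i, one_mul]
    · intro p _ hp
      have h0 : (∏ i, A i (p i)) = 0 := by rw [hprod p, if_neg hp]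
      have : (∏ i, Matrix.hadamard A B i (p i)) = 0 := by
        simp only [Matrix.hadamard_apply]
        rw [Finset.prod_mul_distrib, h0, zero_mul]
      rw [this, mul_zero]
  rw [hexp]
  have hpos : 0 < ∑ p ∈ S, ∏ i, B i (p i) := by
    refine Finset.sum_pos (fun p hp => ?_) hSne
    refine Finset.prod_pos fun i _ => ?_
    have hA1 : ∀ i, A i (p i) = 1 := by simpa [hS, Finset.mem_filter] using hp
    exact hB _ _ (hA1 i)
  have hσne : σ ≠ 0 := by
    rcases ite_eq_or_eq (0 < A.det) (1:ℝ) (-1) with h | h <;> rw [hσdef, h] <;> norm_num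
  exact mul_ne_zero hσne (ne_of_gt hpos)
end

section
/- Let w₀¹,…,w₀ᴺ ∈ S^{d-1}, x¹,…,xⁿ ∈ ℝ^d with N ≤ n, and define the N×n matrix K with entries K_{ij} = σ(⟨w₀^i, x^j⟩) where σ is ReLU. Write K = Π ⊙ (WᵀX) where Π_{ij} = 1 if ⟨w₀^i, x^j⟩ > 0 and 0 otherwise. If some N×N minor Π_N of Π has full rank and satisfies perm(Π_N) = |det(Π_N)|, then the rows of K (equivalently, the measurement vectors Kδ_{w₀^i} ∈ ℝⁿ) are linearly independent. -/
open RealInnerProductSpace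

/-- If some `N×N` column-minor `Π_N` of the activation-pattern matrix `Π` is nonsingular and
satisfies `perm(Π_N) = |det(Π_N)|`, then the rows of `K`, i.e. the measurement vectors
`Kδ_{w₀^i} = (σ(⟨w₀^i,x^1⟩),…,σ(⟨w₀^i,x^n⟩))`, are linearly independent. -/
theorem stmt11 (d n N : ℕ) (hNn : N ≤ n)
    (x : Fin n → EuclideanSpace ℝ (Fin d)) (w₀ : Fin N → EuclideanSpace ℝ (Fin d))
    (hw : ∀ i, ‖w₀ i‖ = 1)
    (c : Fin N → Fin n) (hc : Function.Injective c)
    (hrank : (Matrix.of fun i k : Fin N =>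
        if 0 < ⟪w₀ i, x (c k)⟫ then (1 : ℝ) else 0).det ≠ 0)
    (hperm : Matrix.perm' (Matrix.of fun i k : Fin N =>
          if 0 < ⟪w₀ i, x (c k)⟫ then (1 : ℝ) else 0)
        = |(Matrix.of fun i k : Fin N =>
          if 0 < ⟪w₀ i, x (c k)⟫ then (1 : ℝ) else 0).det|) :
    LinearIndependent ℝ (fun i : Fin N => fun j : Fin n => max 0 ⟪w₀ i, x j⟫) := by
  classical
  set P : Matrix (Fin N) (Fin N) ℝ :=
    Matrix.of (fun i k : Fin N => if 0 < ⟪w₀ i, x (c k)⟫ then (1 : ℝ) else 0) with hPdef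
  set M : Matrix (Fin N) (Fin N) ℝ :=
    Matrix.of (fun i k : Fin N => max 0 ⟪w₀ i, x (c k)⟫) with hMdef
  set s : Finset (Equiv.Perm (Fin N)) :=
    Finset.univ.filter (fun σ => ∀ i, 0 < ⟪w₀ i, x (c (σ i))⟫) with hsdef
  have hmem : ∀ σ : Equiv.Perm (Fin N), σ ∈ s ↔ ∀ i, 0 < ⟪w₀ i, x (c (σ i))⟫ := by
    intro σ; simp only [hsdef, Finset.mem_filter, Finset.mem_univ, true_and]
  have hprodP : ∀ σ : Equiv.Perm (Fin N),
      (∏ i, P i (σ i)) = if σ ∈ s then (1 : ℝ) else 0 := by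
    intro σ
    by_cases h : σ ∈ s
    · rw [if_pos h]
      rw [hmem] at h
      refine Finset.prod_eq_one (fun i _ => ?_)
      show (if 0 < ⟪w₀ i, x (c (σ i))⟫ then (1 : ℝ) else 0) = 1
      rw [if_pos (h i)]
    · rw [if_neg h]
      rw [hmem] at h
      push_neg at h
      obtain ⟨i, hi⟩ := h
      refine Finset.prod_eq_zero (Finset.mem_univ i) ?_
      show (if 0 < ⟪w₀ i, x (c (σ i))⟫ then (1 : ℝ) else 0) = 0
      rw [if_neg (not_lt.mpr hi)]
  have hprodM : ∀ σ : Equiv.Perm (Fin N),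
      (∏ i, M i (σ i)) = if σ ∈ s then ∏ i, ⟪w₀ i, x (c (σ i))⟫ else 0 := by
    intro σ
    by_cases h : σ ∈ s
    · rw [if_pos h]
      rw [hmem] at h
      refine Finset.prod_congr rfl (fun i _ => ?_)
      show max 0 ⟪w₀ i, x (c (σ i))⟫ = ⟪w₀ i, x (c (σ i))⟫
      exact max_eq_right (h i).le
    · rw [if_neg h]
      rw [hmem] at h
      push_neg at h
      obtain ⟨i, hi⟩ := h
      refine Finset.prod_eq_zero (Finset.mem_univ i) ?_
      show max 0 ⟪w₀ i, x (c (σ i))⟫ = 0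
      exact max_eq_left hi
  have hmpos : ∀ σ ∈ s, (0:ℝ) < ∏ i, ⟪w₀ i, x (c (σ i))⟫ := by
    intro σ hσ
    rw [hmem] at hσ
    exact Finset.prod_pos (fun i _ => hσ i)
  have hdetP : P.det = ∑ σ ∈ s, ((Equiv.Perm.sign σ : ℤ) : ℝ) := by
    rw [← Matrix.det_transpose, Matrix.det_apply']
    have key : ∀ σ : Equiv.Perm (Fin N),
        ((Equiv.Perm.sign σ : ℤ) : ℝ) * ∏ i, P.transpose (σ i) i
          = if σ ∈ s then ((Equiv.Perm.sign σ : ℤ) : ℝ) else 0 := by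
      intro σ
      simp only [Matrix.transpose_apply]
      rw [hprodP σ]
      split <;> simp
    rw [Finset.sum_congr rfl (fun σ _ => key σ), Finset.sum_ite_mem, Finset.univ_inter]
  have hpermP : Matrix.perm' P = (s.card : ℝ) := by
    unfold Matrix.perm'
    rw [Finset.sum_congr rfl (fun σ _ => hprodP σ), Finset.sum_ite_mem, Finset.univ_inter,
      Finset.sum_const, nsmul_eq_mul, mul_one]
  have hdetM : M.transpose.det = ∑ σ ∈ s,
      ((Equiv.Perm.sign σ : ℤ) : ℝ) * ∏ i, ⟪w₀ i, x (c (σ i))⟫ := by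
    rw [Matrix.det_apply']
    have key : ∀ σ : Equiv.Perm (Fin N),
        ((Equiv.Perm.sign σ : ℤ) : ℝ) * ∏ i, M.transpose (σ i) i
          = if σ ∈ s then ((Equiv.Perm.sign σ : ℤ) : ℝ) * ∏ i, ⟪w₀ i, x (c (σ i))⟫ else 0 := by
      intro σ
      simp only [Matrix.transpose_apply]
      rw [hprodM σ]
      split <;> simp
    rw [Finset.sum_congr rfl (fun σ _ => key σ), Finset.sum_ite_mem, Finset.univ_inter]
  have hsgn : ∀ σ : Equiv.Perm (Fin N),
      ((Equiv.Perm.sign σ : ℤ) : ℝ) = 1 ∨ ((Equiv.Perm.sign σ : ℤ) : ℝ) = -1 := by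
    intro σ
    rcases Int.units_eq_one_or (Equiv.Perm.sign σ) with h | h <;> simp [h]
  have hne : s.Nonempty := by
    by_contra h
    rw [Finset.not_nonempty_iff_eq_empty] at h
    rw [h, Finset.sum_empty] at hdetP
    exact hrank hdetP
  have hdetM_ne : M.transpose.det ≠ 0 := by
    rcases hrank.lt_or_gt with hneg | hpos
    · have habs : (s.card : ℝ) = -∑ σ ∈ s, ((Equiv.Perm.sign σ : ℤ) : ℝ) := by
        rw [← hdetP, ← abs_of_neg hneg, ← hperm, hpermP]
      have hsum : ∑ σ ∈ s, (1 + ((Equiv.Perm.sign σ : ℤ) : ℝ)) = 0 := by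
        rw [Finset.sum_add_distrib, Finset.sum_const, nsmul_eq_mul, mul_one]
        linarith
      have hall : ∀ σ ∈ s, ((Equiv.Perm.sign σ : ℤ) : ℝ) = -1 := by
        intro σ hσ
        have h0 := (Finset.sum_eq_zero_iff_of_nonneg (fun τ _ => by
          rcases hsgn τ with h | h <;> rw [h] <;> norm_num)).mp hsum σ hσ
        linarith
      have hlt : M.transpose.det < 0 := by
        rw [hdetM]
        have heq : ∑ σ ∈ s, ((Equiv.Perm.sign σ : ℤ) : ℝ) * ∏ i, ⟪w₀ i, x (c (σ i))⟫
            = -∑ σ ∈ s, ∏ i, ⟪w₀ i, x (c (σ i))⟫ := by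
          rw [← Finset.sum_neg_distrib]
          exact Finset.sum_congr rfl (fun σ hσ => by rw [hall σ hσ]; ring)
        rw [heq]
        have := Finset.sum_pos (fun σ hσ => hmpos σ hσ) hne
        linarith
      exact hlt.ne
    · have habs : (s.card : ℝ) = ∑ σ ∈ s, ((Equiv.Perm.sign σ : ℤ) : ℝ) := by
        rw [← hdetP, ← abs_of_pos hpos, ← hperm, hpermP]
      have hsum : ∑ σ ∈ s, (1 - ((Equiv.Perm.sign σ : ℤ) : ℝ)) = 0 := by
        rw [Finset.sum_sub_distrib, Finset.sum_const, nsmul_eq_mul, mul_one]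
        linarith
      have hall : ∀ σ ∈ s, ((Equiv.Perm.sign σ : ℤ) : ℝ) = 1 := by
        intro σ hσ
        have h0 := (Finset.sum_eq_zero_iff_of_nonneg (fun τ _ => by
          rcases hsgn τ with h | h <;> rw [h] <;> norm_num)).mp hsum σ hσ
        linarith
      have hgt : 0 < M.transpose.det := by
        rw [hdetM]
        have heq : ∑ σ ∈ s, ((Equiv.Perm.sign σ : ℤ) : ℝ) * ∏ i, ⟪w₀ i, x (c (σ i))⟫
            = ∑ σ ∈ s, ∏ i, ⟪w₀ i, x (c (σ i))⟫ :=
          Finset.sum_congr rfl (fun σ hσ => by rw [hall σ hσ]; ring)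
        rw [heq]
        exact Finset.sum_pos (fun σ hσ => hmpos σ hσ) hne
      exact hgt.ne'
  rw [Fintype.linearIndependent_iff]
  intro g hg i
  have h0 : M.transpose.mulVec g = 0 := by
    funext k
    have hgk := congrFun hg (c k)
    simp only [Finset.sum_apply, Pi.smul_apply, smul_eq_mul, Pi.zero_apply] at hgk
    simp only [Matrix.mulVec, dotProduct, Matrix.transpose_apply, Pi.zero_apply]
    rw [← hgk]
    refine Finset.sum_congr rfl (fun i _ => ?_)
    show M i k * g i = g i * max 0 ⟪w₀ i, x (c k)⟫
    rw [mul_comm]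
    rfl
  have hz := Matrix.eq_zero_of_mulVec_eq_zero hdetM_ne h0
  exact congrFun hz i
end

section
/- Suppose μ₀ = Σ_{i=1}^N c₀^i σ^i δ_{w₀^i} with c₀^i > 0, σ^i ∈ {−1,+1}, and distinct points w₀^i ∈ S^{d-1} satisfies Kμ₀ = y₀. Suppose there exists a dual certificate η₀ ∈ C(S^{d-1}) with ‖η₀‖_∞ ≤ 1, η₀(w₀^i) = σ^i for all i, and |η₀(w)| < 1 for all w ∉ {w₀^1,…,w₀^N}, and that the vectors Kδ_{w₀^1},…,Kδ_{w₀^N} ∈ ℝⁿ are linearly independent. Then μ₀ is the unique minimizer of ‖μ‖_TV over all μ ∈ M(S^{d-1}) with Kμ = y₀. -/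
open RealInnerProductSpace MeasureTheory

/-- The forward operator `K : M(S^{d-1}) → ℝⁿ`, `(Kμ)_j = ∫ σ(⟨w,x^j⟩) dμ(w)` with
`σ = ReLU`, defined on signed measures via the Jordan decomposition. -/
noncomputable def Ksgn (d n : ℕ) (x : Fin n → EuclideanSpace ℝ (Fin d))
    (μ : SignedMeasure ↥(Metric.sphere (0 : EuclideanSpace ℝ (Fin d)) 1)) : Fin n → ℝ :=
  fun j =>
    (∫ w, max 0 ⟪(w : EuclideanSpace ℝ (Fin d)), x j⟫ ∂μ.toJordanDecomposition.posPart)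
      - ∫ w, max 0 ⟪(w : EuclideanSpace ℝ (Fin d)), x j⟫ ∂μ.toJordanDecomposition.negPart

/-- The total variation norm of a signed measure. -/
noncomputable def tvNorm {X : Type*} [MeasurableSpace X] (μ : SignedMeasure X) : ℝ :=
  (μ.totalVariation Set.univ).toReal

namespace Stmt14Aux
open scoped Classical

abbrev SphT (d : ℕ) := ↥(Metric.sphere (0 : EuclideanSpace ℝ (Fin d)) 1)

variable {d n N : ℕ}

example : MeasurableSingletonClass (SphT d) := inferInstance
example : BorelSpace (SphT d) := inferInstance

noncomputable def fj (x : Fin n → EuclideanSpace ℝ (Fin d)) (j : Fin n) (v : SphT d) : ℝ :=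
  max 0 ⟪(v : EuclideanSpace ℝ (Fin d)), x j⟫

lemma fj_continuous (x : Fin n → EuclideanSpace ℝ (Fin d)) (j : Fin n) :
    Continuous (fj x j) :=
  continuous_const.max (Continuous.inner continuous_subtype_val continuous_const)

lemma fj_bound (x : Fin n → EuclideanSpace ℝ (Fin d)) (j : Fin n) (v : SphT d) :
    |fj x j v| ≤ ‖x j‖ := by
  have hv : ‖(v : EuclideanSpace ℝ (Fin d))‖ = 1 := by
    have := v.2
    simpa [mem_sphere_zero_iff_norm] using this
  have h1 : |⟪(v : EuclideanSpace ℝ (Fin d)), x j⟫| ≤ ‖x j‖ := by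
    have := abs_real_inner_le_norm (v : EuclideanSpace ℝ (Fin d)) (x j)
    simpa [hv] using this
  have h2 : |fj x j v| ≤ |⟪(v : EuclideanSpace ℝ (Fin d)), x j⟫| := by
    rw [fj, abs_of_nonneg (le_max_left _ _)]
    exact max_le (abs_nonneg _) (le_abs_self _)
  exact h2.trans h1

lemma integrable_of_bdd {X : Type*} [MeasurableSpace X] [TopologicalSpace X]
    [OpensMeasurableSpace X] (ν : Measure X) [IsFiniteMeasure ν] {f : X → ℝ} (C : ℝ)
    (hfc : Continuous f) (h : ∀ v, |f v| ≤ C) : Integrable f ν :=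
  Integrable.mono' (integrable_const C) hfc.aestronglyMeasurable
    (ae_of_all _ (by simpa [Real.norm_eq_abs] using h))

lemma fj_integrable (x : Fin n → EuclideanSpace ℝ (Fin d)) (j : Fin n)
    (ν : Measure (SphT d)) [IsFiniteMeasure ν] : Integrable (fj x j) ν :=
  integrable_of_bdd ν ‖x j‖ (fj_continuous x j) (fj_bound x j)

lemma vm_sum_apply {X : Type*} [MeasurableSpace X] {ι : Type*} (s : Finset ι)
    (f : ι → SignedMeasure X) (A : Set X) : (∑ i ∈ s, f i) A = ∑ i ∈ s, f i A := by
  induction s using Finset.cons_induction with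
  | empty => simp
  | cons a s ha ih => rw [Finset.sum_cons, Finset.sum_cons, VectorMeasure.add_apply, ih]

lemma smul_dirac_apply_toReal (c : ℝ) (a : SphT d) (A : Set (SphT d)) :
    ((ENNReal.ofReal c • Measure.dirac a) A).toReal
      = (max c 0) * (if a ∈ A then (1:ℝ) else 0) := by
  rw [Measure.smul_apply, Measure.dirac_apply, smul_eq_mul, ENNReal.toReal_mul,
    ENNReal.toReal_ofReal']
  congr 1
  by_cases h : a ∈ A <;> simp [Set.indicator_apply, h]

lemma smul_dirac_apply_ne_top (c : ℝ) (a : SphT d) (A : Set (SphT d)) :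
    (ENNReal.ofReal c • Measure.dirac a) A ≠ ⊤ := by
  rw [Measure.smul_apply, Measure.dirac_apply, smul_eq_mul]
  refine ENNReal.mul_ne_top ENNReal.ofReal_ne_top ?_
  by_cases h : a ∈ A <;> simp [Set.indicator_apply, h]

noncomputable def diracJD (t : Fin N → ℝ) (w : Fin N → SphT d) (hw : Function.Injective w) :
    JordanDecomposition (SphT d) where
  posPart := ∑ i, ENNReal.ofReal (t i) • Measure.dirac (w i)
  negPart := ∑ i, ENNReal.ofReal (-(t i)) • Measure.dirac (w i)
  posPart_finite := by
    constructor
    rw [Measure.finset_sum_apply]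
    exact ENNReal.sum_lt_top.2 fun i _ => (smul_dirac_apply_ne_top _ _ _).lt_top
  negPart_finite := by
    constructor
    rw [Measure.finset_sum_apply]
    exact ENNReal.sum_lt_top.2 fun i _ => (smul_dirac_apply_ne_top _ _ _).lt_top
  mutuallySingular := by
    refine ⟨w '' {i | t i ≤ 0}, (Set.toFinite _).image w |>.measurableSet, ?_, ?_⟩
    · rw [Measure.finset_sum_apply]
      refine Finset.sum_eq_zero fun i _ => ?_
      rcases le_or_gt (t i) 0 with h | h
      · simp [Measure.smul_apply, ENNReal.ofReal_eq_zero.2 h]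
      · have : w i ∉ w '' {i | t i ≤ 0} := by
          rintro ⟨i', hi', he⟩
          exact absurd (hw he ▸ hi') (not_le.2 h)
        simp [Measure.smul_apply, Measure.dirac_apply, Set.indicator_apply, this]
    · rw [Measure.finset_sum_apply]
      refine Finset.sum_eq_zero fun i _ => ?_
      rcases le_or_gt (t i) 0 with h | h
      · have : w i ∈ w '' {i | t i ≤ 0} := ⟨i, h, rfl⟩
        simp [Measure.smul_apply, Measure.dirac_apply, Set.indicator_apply, this]
      · simp [Measure.smul_apply, ENNReal.ofReal_eq_zero.2 (by linarith : -(t i) ≤ 0)]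

lemma diracJD_toSignedMeasure (t : Fin N → ℝ) (w : Fin N → SphT d) (hw : Function.Injective w) :
    (diracJD t w hw).toSignedMeasure
      = ∑ i, t i • (Measure.dirac (w i)).toSignedMeasure := by
  refine VectorMeasure.ext fun A hA => ?_
  have hsum : (∑ i, t i • (Measure.dirac (w i)).toSignedMeasure) A
      = ∑ i, t i * ((Measure.dirac (w i)).toSignedMeasure A) := by
    rw [vm_sum_apply]
    exact Finset.sum_congr rfl fun i _ => by rw [VectorMeasure.smul_apply]; rfl
  rw [hsum, JordanDecomposition.toSignedMeasure]
  rw [VectorMeasure.sub_apply, Measure.toSignedMeasure_apply_measurable hA,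
    Measure.toSignedMeasure_apply_measurable hA]
  show ((∑ i, ENNReal.ofReal (t i) • Measure.dirac (w i)) A).toReal
      - ((∑ i, ENNReal.ofReal (-(t i)) • Measure.dirac (w i)) A).toReal = _
  rw [Measure.finset_sum_apply, Measure.finset_sum_apply,
    ENNReal.toReal_sum (fun i _ => smul_dirac_apply_ne_top _ _ _),
    ENNReal.toReal_sum (fun i _ => smul_dirac_apply_ne_top _ _ _),
    ← Finset.sum_sub_distrib]
  refine Finset.sum_congr rfl fun i _ => ?_
  rw [smul_dirac_apply_toReal, smul_dirac_apply_toReal,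
    Measure.toSignedMeasure_apply_measurable hA, measureReal_def, Measure.dirac_apply]
  by_cases h : w i ∈ A
  · simp only [Set.indicator_apply, h, if_true, Pi.one_apply, ENNReal.toReal_one, mul_one]
    exact max_zero_sub_max_neg_zero_eq_self (t i)
  · simp [Set.indicator_apply, h]


lemma toJD_sum (t : Fin N → ℝ) (w : Fin N → SphT d) (hw : Function.Injective w) :
    (∑ i, t i • (Measure.dirac (w i)).toSignedMeasure).toJordanDecomposition
      = diracJD t w hw :=
  SignedMeasure.toJordanDecomposition_eq (diracJD_toSignedMeasure t w hw).symm

lemma tvNorm_sum (t : Fin N → ℝ) (w : Fin N → SphT d) (hw : Function.Injective w) :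
    tvNorm (∑ i, t i • (Measure.dirac (w i)).toSignedMeasure) = ∑ i, |t i| := by
  rw [tvNorm, SignedMeasure.totalVariation, toJD_sum t w hw]
  show (((∑ i, ENNReal.ofReal (t i) • Measure.dirac (w i))
      + ∑ i, ENNReal.ofReal (-(t i)) • Measure.dirac (w i)) Set.univ).toReal = _
  rw [Measure.add_apply, Measure.finset_sum_apply, Measure.finset_sum_apply,
    ENNReal.toReal_add
      ((ENNReal.sum_lt_top.2 fun i _ => (smul_dirac_apply_ne_top _ _ _).lt_top).ne)
      ((ENNReal.sum_lt_top.2 fun i _ => (smul_dirac_apply_ne_top _ _ _).lt_top).ne),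
    ENNReal.toReal_sum (fun i _ => smul_dirac_apply_ne_top _ _ _),
    ENNReal.toReal_sum (fun i _ => smul_dirac_apply_ne_top _ _ _), ← Finset.sum_add_distrib]
  refine Finset.sum_congr rfl fun i _ => ?_
  rw [smul_dirac_apply_toReal, smul_dirac_apply_toReal]
  simp only [Set.mem_univ, if_true, mul_one]
  exact max_zero_add_max_neg_zero_eq_abs_self (t i)

lemma Ksgn_sum (x : Fin n → EuclideanSpace ℝ (Fin d)) (t : Fin N → ℝ) (w : Fin N → SphT d)
    (hw : Function.Injective w) (j : Fin n) :
    Ksgn d n x (∑ i, t i • (Measure.dirac (w i)).toSignedMeasure) j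
      = ∑ i, t i * fj x j (w i) := by
  rw [Ksgn, toJD_sum t w hw]
  show (∫ v, fj x j v ∂(∑ i, ENNReal.ofReal (t i) • Measure.dirac (w i)))
      - (∫ v, fj x j v ∂(∑ i, ENNReal.ofReal (-(t i)) • Measure.dirac (w i))) = _
  rw [integral_finset_sum_measure (fun i _ =>
      (fj_integrable x j (Measure.dirac (w i))).smul_measure ENNReal.ofReal_ne_top),
    integral_finset_sum_measure (fun i _ =>
      (fj_integrable x j (Measure.dirac (w i))).smul_measure ENNReal.ofReal_ne_top),
    ← Finset.sum_sub_distrib]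
  refine Finset.sum_congr rfl fun i _ => ?_
  rw [integral_smul_measure, integral_smul_measure, integral_dirac,
    ENNReal.toReal_ofReal', ENNReal.toReal_ofReal', smul_eq_mul, smul_eq_mul, ← sub_mul,
    max_zero_sub_max_neg_zero_eq_self]

lemma Ksgn_dirac (x : Fin n → EuclideanSpace ℝ (Fin d)) (w₀ : SphT d) :
    Ksgn d n x ((Measure.dirac w₀).toSignedMeasure) = fun j => fj x j w₀ := by
  have hjd : ((Measure.dirac w₀).toSignedMeasure).toJordanDecomposition
      = { posPart := Measure.dirac w₀, negPart := 0,
          mutuallySingular := Measure.MutuallySingular.zero_right } := by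
    refine SignedMeasure.toJordanDecomposition_eq ?_
    rw [JordanDecomposition.toSignedMeasure]
    show _ = (Measure.dirac w₀).toSignedMeasure - (0 : Measure (SphT d)).toSignedMeasure
    rw [Measure.toSignedMeasure_zero, sub_zero]
  funext j
  rw [Ksgn, hjd]
  show (∫ v, fj x j v ∂(Measure.dirac w₀)) - (∫ v, fj x j v ∂(0 : Measure (SphT d))) = _
  rw [integral_dirac, integral_zero_measure, sub_zero]

noncomputable def eta (x : Fin n → EuclideanSpace ℝ (Fin d)) (p₀ : Fin n → ℝ)
    (v : SphT d) : ℝ :=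
  ∑ j, p₀ j * fj x j v

lemma eta_integrable (x : Fin n → EuclideanSpace ℝ (Fin d)) (p₀ : Fin n → ℝ)
    (ν : Measure (SphT d)) [IsFiniteMeasure ν] : Integrable (eta x p₀) ν := by
  have : Integrable (fun v => ∑ j, p₀ j * fj x j v) ν :=
    integrable_finset_sum _ fun j _ => (fj_integrable x j ν).const_mul (p₀ j)
  exact this

lemma integral_eta (x : Fin n → EuclideanSpace ℝ (Fin d)) (p₀ : Fin n → ℝ)
    (ν : Measure (SphT d)) [IsFiniteMeasure ν] :
    ∫ v, eta x p₀ v ∂ν = ∑ j, p₀ j * ∫ v, fj x j v ∂ν := by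
  show ∫ v, ∑ j, p₀ j * fj x j v ∂ν = _
  rw [integral_finset_sum _ fun j _ => (fj_integrable x j ν).const_mul (p₀ j)]
  exact Finset.sum_congr rfl fun j _ => integral_const_mul _ _

lemma pairing (x : Fin n → EuclideanSpace ℝ (Fin d)) (p₀ : Fin n → ℝ)
    (μ : SignedMeasure (SphT d)) :
    ∑ j, p₀ j * Ksgn d n x μ j
      = (∫ v, eta x p₀ v ∂μ.toJordanDecomposition.posPart)
        - ∫ v, eta x p₀ v ∂μ.toJordanDecomposition.negPart := by
  rw [integral_eta, integral_eta, ← Finset.sum_sub_distrib]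
  refine Finset.sum_congr rfl fun j _ => ?_
  rw [Ksgn, mul_sub]
  rfl

lemma integral_le_measure_univ (ν : Measure (SphT d)) [IsFiniteMeasure ν] {g : SphT d → ℝ}
    (hi : Integrable g ν) (hb : ∀ v, g v ≤ 1) : ∫ v, g v ∂ν ≤ (ν Set.univ).toReal := by
  have := integral_mono hi (integrable_const 1) hb
  simpa [integral_const, smul_eq_mul, measureReal_def] using this

lemma measure_eq_sum_of_support (ν : Measure (SphT d)) [IsFiniteMeasure ν]
    (w : Fin N → SphT d) (hw : Function.Injective w)
    (h0 : ν ((Set.range w)ᶜ) = 0) {A : Set (SphT d)} (hA : MeasurableSet A) :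
    ν A = ∑ i, if w i ∈ A then ν {w i} else 0 := by
  have hr : MeasurableSet (Set.range w) := (Set.finite_range w).measurableSet
  have hsplit : ν A = ν (A ∩ Set.range w) + ν (A \ Set.range w) :=
    (measure_inter_add_diff A hr).symm
  have h2 : ν (A \ Set.range w) = 0 :=
    measure_mono_null (fun v hv => hv.2) h0
  have h3 : A ∩ Set.range w = ⋃ i ∈ (Finset.univ : Finset (Fin N)), A ∩ {w i} := by
    rw [Set.range_eq_iUnion, Set.inter_iUnion]
    simp
  have h4 : ν (A ∩ Set.range w) = ∑ i, ν (A ∩ {w i}) := by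
    rw [h3]
    refine measure_biUnion_finset ?_ fun i _ => hA.inter (measurableSet_singleton _)
    intro i _ i' _ hne
    refine Set.disjoint_left.2 fun v hv hv' => hne (hw ?_)
    rw [← hv.2, ← hv'.2]
  rw [hsplit, h2, add_zero, h4]
  refine Finset.sum_congr rfl fun i _ => ?_
  by_cases h : w i ∈ A
  · rw [if_pos h, Set.inter_eq_self_of_subset_right (Set.singleton_subset_iff.2 h)]
  · rw [if_neg h, Set.inter_singleton_eq_empty.2 h, measure_empty]

lemma sm_eq_sum (μ : SignedMeasure (SphT d)) (w : Fin N → SphT d) (hw : Function.Injective w)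
    (hpos : μ.toJordanDecomposition.posPart ((Set.range w)ᶜ) = 0)
    (hneg : μ.toJordanDecomposition.negPart ((Set.range w)ᶜ) = 0) :
    μ = ∑ i, ((μ.toJordanDecomposition.posPart {w i}).toReal
              - (μ.toJordanDecomposition.negPart {w i}).toReal)
          • (Measure.dirac (w i)).toSignedMeasure := by
  refine VectorMeasure.ext fun A hA => ?_
  rw [vm_sum_apply]
  have hμA : μ A = (μ.toJordanDecomposition.posPart A).toReal
      - (μ.toJordanDecomposition.negPart A).toReal := by
    conv_lhs => rw [← SignedMeasure.toSignedMeasure_toJordanDecomposition μ]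
    rw [JordanDecomposition.toSignedMeasure, VectorMeasure.sub_apply,
      Measure.toSignedMeasure_apply_measurable hA, Measure.toSignedMeasure_apply_measurable hA]
    rfl
  rw [hμA, measure_eq_sum_of_support _ w hw hpos hA, measure_eq_sum_of_support _ w hw hneg hA,
    ENNReal.toReal_sum (fun i _ => by split <;> simp [measure_ne_top]),
    ENNReal.toReal_sum (fun i _ => by split <;> simp [measure_ne_top]),
    ← Finset.sum_sub_distrib]
  refine Finset.sum_congr rfl fun i _ => ?_
  rw [VectorMeasure.smul_apply, Measure.toSignedMeasure_apply_measurable hA,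
    measureReal_def, Measure.dirac_apply]
  by_cases h : w i ∈ A <;> simp [Set.indicator_apply, h]

end Stmt14Aux

open Stmt14Aux

/-- Uniqueness of the sparse minimizer of the TV-interpolation problem: if
`μ₀ = Σ c₀^i σ^i δ_{w₀^i}` is feasible, a dual certificate `η₀ = K_* p₀` satisfies
`‖η₀‖_∞ ≤ 1`, `η₀(w₀^i) = σ^i`, and `|η₀| < 1` off the atoms, and the measurement vectors
`Kδ_{w₀^i}` are linearly independent, then `μ₀` is the unique TV-minimizer subject to
`Kμ = y₀`. -/
theorem stmt14 (d n N : ℕ) (x : Fin n → EuclideanSpace ℝ (Fin d)) (y₀ : Fin n → ℝ)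
    (c : Fin N → ℝ) (hc : ∀ i, 0 < c i)
    (s : Fin N → ℝ) (hs : ∀ i, s i = 1 ∨ s i = -1)
    (w : Fin N → ↥(Metric.sphere (0 : EuclideanSpace ℝ (Fin d)) 1))
    (hw : Function.Injective w)
    (p₀ : Fin n → ℝ)
    (hη1 : ∀ v : ↥(Metric.sphere (0 : EuclideanSpace ℝ (Fin d)) 1),
      |∑ j, p₀ j * max 0 ⟪(v : EuclideanSpace ℝ (Fin d)), x j⟫| ≤ 1)
    (hηsat : ∀ i, (∑ j, p₀ j * max 0 ⟪(w i : EuclideanSpace ℝ (Fin d)), x j⟫) = s i)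
    (hηstrict : ∀ v : ↥(Metric.sphere (0 : EuclideanSpace ℝ (Fin d)) 1),
      (∀ i, v ≠ w i) →
        |∑ j, p₀ j * max 0 ⟪(v : EuclideanSpace ℝ (Fin d)), x j⟫| < 1)
    (hli : LinearIndependent ℝ
      (fun i : Fin N => Ksgn d n x ((Measure.dirac (w i)).toSignedMeasure)))
    (hfeas : Ksgn d n x (∑ i, (s i * c i) • (Measure.dirac (w i)).toSignedMeasure) = y₀) :
    ∀ μ : SignedMeasure ↥(Metric.sphere (0 : EuclideanSpace ℝ (Fin d)) 1),
      Ksgn d n x μ = y₀ →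
        tvNorm (∑ i, (s i * c i) • (Measure.dirac (w i)).toSignedMeasure) ≤ tvNorm μ ∧
        (tvNorm μ = tvNorm (∑ i, (s i * c i) • (Measure.dirac (w i)).toSignedMeasure) →
          μ = ∑ i, (s i * c i) • (Measure.dirac (w i)).toSignedMeasure) := by
  classical
  intro μ hμ
  have hη1' : ∀ v, |eta x p₀ v| ≤ 1 := hη1
  have hηsat' : ∀ i, eta x p₀ (w i) = s i := hηsat
  have hηstrict' : ∀ v, (∀ i, v ≠ w i) → |eta x p₀ v| < 1 := hηstrict
  have hsq : ∀ i, s i * s i = 1 := fun i => by rcases hs i with h | h <;> rw [h] <;> norm_num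
  -- the value ∑ j, p₀ j * y₀ j equals ∑ i, c i
  have hy₀ : ∑ j, p₀ j * y₀ j = ∑ i, c i := by
    rw [← hfeas]
    have h1 : ∀ j, Ksgn d n x (∑ i, (s i * c i) • (Measure.dirac (w i)).toSignedMeasure) j
        = ∑ i, (s i * c i) * fj x j (w i) := fun j => Ksgn_sum x _ w hw j
    simp only [h1]
    have h2 : ∑ j, p₀ j * ∑ i, (s i * c i) * fj x j (w i)
        = ∑ i, (s i * c i) * (∑ j, p₀ j * fj x j (w i)) := by
      simp only [Finset.mul_sum]
      rw [Finset.sum_comm]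
      exact Finset.sum_congr rfl fun i _ => Finset.sum_congr rfl fun j _ => by ring
    rw [h2]
    refine Finset.sum_congr rfl fun i _ => ?_
    have : (∑ j, p₀ j * fj x j (w i)) = s i := hηsat i
    rw [this]
    rcases hs i with h | h <;> rw [h] <;> ring
  -- total variation norm of μ₀
  have htv₀ : tvNorm (∑ i, (s i * c i) • (Measure.dirac (w i)).toSignedMeasure)
      = ∑ i, c i := by
    rw [tvNorm_sum _ w hw]
    exact Finset.sum_congr rfl fun i _ => by
      rw [abs_mul]
      rcases hs i with h | h <;> rw [h] <;> simp [abs_of_pos (hc i)]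
  -- pairing identity and bounds for μ
  set Pos := μ.toJordanDecomposition.posPart with hPos
  set Neg := μ.toJordanDecomposition.negPart with hNeg
  have hpair : ∑ i, c i = (∫ v, eta x p₀ v ∂Pos) - ∫ v, eta x p₀ v ∂Neg := by
    rw [← hy₀, ← hμ]
    simpa using pairing x p₀ μ
  have hIpos : Integrable (eta x p₀) Pos := eta_integrable x p₀ Pos
  have hIneg : Integrable (eta x p₀) Neg := eta_integrable x p₀ Neg
  have hb1 : (∫ v, eta x p₀ v ∂Pos) ≤ (Pos Set.univ).toReal :=
    integral_le_measure_univ Pos hIpos fun v => (abs_le.1 (hη1' v)).2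
  have hb2 : -(∫ v, eta x p₀ v ∂Neg) ≤ (Neg Set.univ).toReal := by
    have := integral_le_measure_univ Neg hIneg.neg
      (fun v => by have := (abs_le.1 (hη1' v)).1; simp; linarith)
    simp only [Pi.neg_apply] at this
    rwa [integral_neg] at this
  have htvμ : tvNorm μ = (Pos Set.univ).toReal + (Neg Set.univ).toReal := by
    rw [tvNorm, SignedMeasure.totalVariation, Measure.add_apply,
      ENNReal.toReal_add (measure_ne_top _ _) (measure_ne_top _ _)]
  constructor
  · rw [htv₀, htvμ]
    linarith [hpair, hb1, hb2]
  · intro heq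
    rw [htv₀] at heq
    rw [htvμ] at heq
    have e1 : (∫ v, eta x p₀ v ∂Pos) = (Pos Set.univ).toReal := by linarith
    have e2 : (∫ v, eta x p₀ v ∂Neg) = -(Neg Set.univ).toReal := by linarith
    -- Pos is concentrated on range w
    have hpos0 : Pos ((Set.range w)ᶜ) = 0 := by
      have hz : ∫ v, (1 - eta x p₀ v) ∂Pos = 0 := by
        rw [integral_sub (integrable_const 1) hIpos, integral_const]
        simp [e1, measureReal_def]
      have hae := (integral_eq_zero_iff_of_nonneg
        (fun v => by have := (abs_le.1 (hη1' v)).2; simp; linarith)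
        ((integrable_const 1).sub hIpos)).1 hz
      have hnull : Pos {v | ¬ ((1 : ℝ) - eta x p₀ v = 0)} = 0 := by
        have := hae
        rw [Filter.EventuallyEq, Filter.eventually_iff, mem_ae_iff] at this
        simpa [Set.compl_setOf] using this
      refine measure_mono_null (fun v hv => ?_) hnull
      have hne : ∀ i, v ≠ w i := fun i hvi => hv ⟨i, hvi.symm⟩
      have := hηstrict' v hne
      have : eta x p₀ v < 1 := lt_of_abs_lt this
      simp only [Set.mem_setOf_eq]
      intro hcontra
      linarith
    have hneg0 : Neg ((Set.range w)ᶜ) = 0 := by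
      have hz : ∫ v, (1 + eta x p₀ v) ∂Neg = 0 := by
        rw [integral_add (integrable_const 1) hIneg, integral_const]
        simp [e2, measureReal_def]
      have hae := (integral_eq_zero_iff_of_nonneg
        (fun v => by have := (abs_le.1 (hη1' v)).1; simp; linarith)
        ((integrable_const 1).add hIneg)).1 hz
      have hnull : Neg {v | ¬ ((1 : ℝ) + eta x p₀ v = 0)} = 0 := by
        rw [Filter.EventuallyEq, Filter.eventually_iff, mem_ae_iff] at hae
        simpa [Set.compl_setOf] using hae
      refine measure_mono_null (fun v hv => ?_) hnull
      have hne : ∀ i, v ≠ w i := fun i hvi => hv ⟨i, hvi.symm⟩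
      have := hηstrict' v hne
      have : -1 < eta x p₀ v := neg_lt_of_abs_lt this
      simp only [Set.mem_setOf_eq]
      intro hcontra
      linarith
    -- μ is a combination of diracs
    set t : Fin N → ℝ := fun i => (Pos {w i}).toReal - (Neg {w i}).toReal with ht
    have hform : μ = ∑ i, t i • (Measure.dirac (w i)).toSignedMeasure :=
      sm_eq_sum μ w hw hpos0 hneg0
    -- linear independence gives t i = s i * c i
    have hcoef : ∀ i, t i - s i * c i = 0 := by
      refine Fintype.linearIndependent_iff.1 hli (fun i => t i - s i * c i) ?_
      funext j
      have hKt : Ksgn d n x μ j = ∑ i, t i * fj x j (w i) := by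
        rw [hform]; exact Ksgn_sum x t w hw j
      have hK₀ : (y₀ : Fin n → ℝ) j = ∑ i, (s i * c i) * fj x j (w i) := by
        rw [← hfeas]; exact Ksgn_sum x _ w hw j
      have hsum : ∑ i, (t i - s i * c i) * fj x j (w i) = 0 := by
        have : ∑ i, (t i - s i * c i) * fj x j (w i)
            = (∑ i, t i * fj x j (w i)) - ∑ i, (s i * c i) * fj x j (w i) := by
          rw [← Finset.sum_sub_distrib]
          exact Finset.sum_congr rfl fun i _ => by ring
        rw [this, ← hKt, ← hK₀, hμ, sub_self]
      calc (∑ i, (t i - s i * c i) • Ksgn d n x ((Measure.dirac (w i)).toSignedMeasure)) j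
          = ∑ i, (t i - s i * c i) * fj x j (w i) := by
            rw [Finset.sum_apply]
            exact Finset.sum_congr rfl fun i _ => by rw [Ksgn_dirac, Pi.smul_apply]; rfl
        _ = 0 := hsum
    rw [hform]
    exact Finset.sum_congr rfl fun i _ => by
      have := hcoef i
      have : t i = s i * c i := by linarith
      rw [this]
end

section
/- Let K: M(X) → Y be weak*-to-strong continuous linear, X compact metric, Y a Hilbert space, and y₀ ∈ Y with Kμ̄ = y₀ for some μ̄. Suppose ζ_n ∈ Y and λ_n > 0 satisfy ‖ζ_n‖ → 0, λ_n → 0, and ‖ζ_n‖²/λ_n → 0. Then any sequence μ_n of minimizers of μ ↦ ½‖Kμ − (y₀ + ζ_n)‖² + λ_n‖μ‖_TV admits a weak*-convergent subsequence, and every weak* limit point is a minimizer of ‖μ‖_TV subject to Kμ = y₀. -/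
open MeasureTheory

/-- Integration of a continuous function against a signed measure, via the Jordan
decomposition. -/
noncomputable def sInt {X : Type*} [TopologicalSpace X] [MeasurableSpace X]
    (μ : SignedMeasure X) (f : C(X, ℝ)) : ℝ :=
  (∫ x, f x ∂μ.toJordanDecomposition.posPart) - ∫ x, f x ∂μ.toJordanDecomposition.negPart

/-- Weak* convergence of a sequence of signed measures (tested against `C(X)`). -/
def WeakStarTendsto {X : Type*} [TopologicalSpace X] [MeasurableSpace X]
    (μs : ℕ → SignedMeasure X) (μ : SignedMeasure X) : Prop :=
  ∀ f : C(X, ℝ), Filter.Tendsto (fun k => sInt (μs k) f) Filter.atTop (nhds (sInt μ f))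

set_option linter.unusedSectionVars false
set_option maxHeartbeats 1000000

open MeasureTheory Set Filter Topology TopologicalSpace
open scoped ENNReal NNReal


namespace Stmt15Aux

/-- telescoping layer lemma -/
theorem sum_min_max (M : ℕ) (a h : ℝ) (ha : 0 ≤ a) (hh : 0 ≤ h) :
    ∑ j ∈ Finset.range M, min (max (a - j * h) 0) h = min a (M * h) := by
  induction M with
  | zero => simp [ha]
  | succ M ih =>
    rw [Finset.sum_range_succ, ih]
    rcases le_total a (M * h) with hle | hle
    · have h1 : max (a - M * h) 0 = 0 := by
        rw [max_eq_right]; linarith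
      have h2 : min a ((M:ℝ) * h) = a := min_eq_left hle
      have h3 : min a (((M:ℕ)+1 : ℕ) * h) = a := by
        rw [min_eq_left]; push_cast; nlinarith
      rw [h1, h3, h2]; simp [hh]
    · have h1 : max (a - M * h) 0 = a - M * h := by
        rw [max_eq_left]; linarith
      have h2 : min a ((M:ℝ) * h) = (M:ℝ) * h := min_eq_right hle
      rw [h1, h2]
      push_cast
      rcases le_total (a - M * h) h with hc | hc
      · rw [min_eq_left hc, min_eq_left (by linarith)]; ring
      · rw [min_eq_right hc, min_eq_right (by linarith)]; ring

variable {X : Type*} [MetricSpace X] [CompactSpace X] [MeasurableSpace X] [BorelSpace X]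
variable (L : C(X, ℝ) → ℝ)
  (hadd : ∀ f g, L (f + g) = L f + L g)
  (hsmul : ∀ (c : ℝ) f, L (c • f) = c * L f)
  (hpos : ∀ f, (∀ x, 0 ≤ f x) → 0 ≤ L f)

include hadd hsmul hpos

theorem L_mono {f g : C(X, ℝ)} (h : ∀ x, f x ≤ g x) : L f ≤ L g := by
  have : g = f + (g - f) := by ring
  rw [this, hadd]
  have := hpos (g - f) (fun x => by simpa using sub_nonneg.mpr (h x))
  linarith

theorem L_zero : L 0 = 0 := by
  have := hadd 0 0
  simp at this
  linarith

theorem L_sum {ι : Type*} (s : Finset ι) (F : ι → C(X, ℝ)) :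
    L (∑ i ∈ s, F i) = ∑ i ∈ s, L (F i) := by
  classical
  induction s using Finset.induction_on with
  | empty => simpa using L_zero L hadd hsmul hpos
  | insert _ _ hx ih => rw [Finset.sum_insert hx, Finset.sum_insert hx, hadd, ih]

omit hadd hsmul hpos

/-- Test functions for the Riesz content of a compact set. -/
def testSet (K : Set X) : Set C(X, ℝ) :=
  {f | (∀ x, 0 ≤ f x) ∧ ∀ x ∈ K, 1 ≤ f x}

theorem one_mem_testSet (K : Set X) : (1 : C(X, ℝ)) ∈ testSet K := by
  constructor <;> intro x <;> simp

/-- The Riesz content (real-valued). -/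
noncomputable def rcont (K : Set X) : ℝ := sInf (L '' testSet K)

include hadd hsmul hpos

theorem rcont_nonneg (K : Set X) : 0 ≤ rcont L K :=
  le_csInf ⟨L 1, Set.mem_image_of_mem L (one_mem_testSet K)⟩
    (by rintro y ⟨f, hf, rfl⟩; exact hpos f hf.1)

theorem rcont_le {K : Set X} {f : C(X, ℝ)} (hf : f ∈ testSet K) : rcont L K ≤ L f :=
  csInf_le ⟨0, by rintro y ⟨g, hg, rfl⟩; exact hpos g hg.1⟩ (Set.mem_image_of_mem L hf)

theorem le_rcont {K : Set X} {c : ℝ} (h : ∀ f ∈ testSet K, c ≤ L f) : c ≤ rcont L K :=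
  le_csInf ⟨L 1, Set.mem_image_of_mem L (one_mem_testSet K)⟩
    (by rintro y ⟨f, hf, rfl⟩; exact h f hf)

theorem exists_test {K : Set X} {ε : ℝ} (hε : 0 < ε) :
    ∃ f ∈ testSet K, L f < rcont L K + ε := by
  obtain ⟨y, ⟨f, hf, rfl⟩, hy⟩ := exists_lt_of_csInf_lt
    ⟨L 1, Set.mem_image_of_mem L (one_mem_testSet K)⟩
    (lt_add_of_pos_right (rcont L K) hε)
  exact ⟨f, hf, hy⟩

theorem rcont_mono {K₁ K₂ : Set X} (h : K₁ ⊆ K₂) : rcont L K₁ ≤ rcont L K₂ := by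
  refine le_csInf ⟨L 1, Set.mem_image_of_mem L (one_mem_testSet K₂)⟩ ?_
  rintro y ⟨f, hf, rfl⟩
  exact rcont_le L hadd hsmul hpos ⟨hf.1, fun x hx => hf.2 x (h hx)⟩

theorem rcont_union_le (K₁ K₂ : Set X) :
    rcont L (K₁ ∪ K₂) ≤ rcont L K₁ + rcont L K₂ := by
  refine le_of_forall_pos_le_add fun ε hε => ?_
  obtain ⟨f₁, hf₁, hLf₁⟩ := exists_test L hadd hsmul hpos (K := K₁) (half_pos hε)
  obtain ⟨f₂, hf₂, hLf₂⟩ := exists_test L hadd hsmul hpos (K := K₂) (half_pos hε)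
  have : f₁ + f₂ ∈ testSet (K₁ ∪ K₂) := by
    constructor
    · intro x; simpa using add_nonneg (hf₁.1 x) (hf₂.1 x)
    · rintro x (hx | hx) <;> simp only [ContinuousMap.add_apply]
      · have := hf₁.2 x hx; have := hf₂.1 x; linarith
      · have := hf₂.2 x hx; have := hf₁.1 x; linarith
  calc rcont L (K₁ ∪ K₂) ≤ L (f₁ + f₂) := rcont_le L hadd hsmul hpos this
    _ = L f₁ + L f₂ := hadd f₁ f₂
    _ ≤ rcont L K₁ + rcont L K₂ + ε := by linarith

theorem le_rcont_union {K₁ K₂ : Set X} (hd : Disjoint K₁ K₂)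
    (h₁ : IsClosed K₁) (h₂ : IsClosed K₂) :
    rcont L K₁ + rcont L K₂ ≤ rcont L (K₁ ∪ K₂) := by
  obtain ⟨g, hg0, hg1, hg01⟩ := exists_continuous_zero_one_of_isClosed h₂ h₁ hd.symm
  refine le_rcont L hadd hsmul hpos fun f hf => ?_
  have hmem₁ : f * g ∈ testSet K₁ := by
    constructor
    · intro x
      exact mul_nonneg (hf.1 x) (hg01 x).1
    · intro x hx
      have : g x = 1 := hg1 hx
      simp only [ContinuousMap.mul_apply, this, mul_one]
      exact hf.2 x (Or.inl hx)
  have hmem₂ : f * (1 - g) ∈ testSet K₂ := by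
    constructor
    · intro x
      simp only [ContinuousMap.mul_apply, ContinuousMap.sub_apply, ContinuousMap.one_apply]
      exact mul_nonneg (hf.1 x) (by linarith [(hg01 x).2])
    · intro x hx
      have : g x = 0 := hg0 hx
      simp only [ContinuousMap.mul_apply, ContinuousMap.sub_apply, ContinuousMap.one_apply, this]
      simpa using hf.2 x (Or.inr hx)
  have hsum : f * g + f * (1 - g) = f := by ring
  calc rcont L K₁ + rcont L K₂ ≤ L (f * g) + L (f * (1 - g)) :=
        add_le_add (rcont_le L hadd hsmul hpos hmem₁) (rcont_le L hadd hsmul hpos hmem₂)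
    _ = L (f * g + f * (1 - g)) := (hadd _ _).symm
    _ = L f := by rw [hsum]

/-- The Riesz content as a `Content`. -/
noncomputable def rieszContent : Content X where
  toFun K := Real.toNNReal (rcont L K)
  mono' K₁ K₂ h := Real.toNNReal_mono (rcont_mono L hadd hsmul hpos h)
  sup_disjoint' K₁ K₂ hd h₁ h₂ := by
    simp only [Compacts.coe_sup]
    rw [← Real.toNNReal_add (rcont_nonneg L hadd hsmul hpos _) (rcont_nonneg L hadd hsmul hpos _)]
    exact congrArg Real.toNNReal
      (le_antisymm (rcont_union_le L hadd hsmul hpos K₁ K₂)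
        (le_rcont_union L hadd hsmul hpos hd h₁ h₂))
  sup_le' K₁ K₂ := by
    simp only [Compacts.coe_sup]
    rw [← Real.toNNReal_add (rcont_nonneg L hadd hsmul hpos _) (rcont_nonneg L hadd hsmul hpos _)]
    exact Real.toNNReal_mono (rcont_union_le L hadd hsmul hpos K₁ K₂)

theorem rieszContent_apply (K : Compacts X) :
    (rieszContent L hadd hsmul hpos) K = ENNReal.ofReal (rcont L (K : Set X)) := by
  rw [ENNReal.ofReal]
  rfl

theorem exists_compact_rcont_le {K : Set X} (hK : IsCompact K) {ε : ℝ} (hε : 0 < ε) :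
    ∃ K' : Compacts X, K ⊆ interior (K' : Set X) ∧ rcont L K' ≤ rcont L K + ε := by
  set c := rcont L K with hc
  have hc0 : 0 ≤ c := rcont_nonneg L hadd hsmul hpos K
  set η : ℝ := min (1/2) (ε / (2 + 2 * c)) with hη
  have hη0 : 0 < η := lt_min (by norm_num) (div_pos hε (by linarith))
  have hη2 : η ≤ 1/2 := min_le_left _ _
  obtain ⟨f, hf, hLf⟩ := exists_test L hadd hsmul hpos (K := K) hη0
  refine ⟨⟨{x | 1 - η ≤ f x}, (isClosed_le (by continuity) f.continuous).isCompact⟩, ?_, ?_⟩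
  · show K ⊆ interior {x | 1 - η ≤ f x}
    have hopen : IsOpen {x | 1 - η < f x} := isOpen_lt (by continuity) f.continuous
    have hsubint : {x | 1 - η < f x} ⊆ interior {x | 1 - η ≤ f x} :=
      interior_maximal (fun x (hx : 1 - η < f x) => le_of_lt hx) hopen
    refine subset_trans (fun x hx => ?_) hsubint
    have := hf.2 x hx; simp only [Set.mem_setOf_eq]; linarith
  · have h1η : (0:ℝ) < 1 - η := by linarith
    have hs : (1 - η)⁻¹ • f ∈ testSet {x | 1 - η ≤ f x} := by
      constructor
      · intro x
        simp only [ContinuousMap.smul_apply, smul_eq_mul]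
        exact mul_nonneg (inv_nonneg.mpr h1η.le) (hf.1 x)
      · intro x hx
        simp only [Set.mem_setOf_eq] at hx
        simp only [ContinuousMap.smul_apply, smul_eq_mul]
        rw [le_inv_mul_iff₀ h1η, mul_one]
        exact hx
    calc rcont L _ ≤ L ((1 - η)⁻¹ • f) := rcont_le L hadd hsmul hpos hs
      _ = (1 - η)⁻¹ * L f := hsmul _ _
      _ ≤ (1 - η)⁻¹ * (c + η) := by
          exact mul_le_mul_of_nonneg_left (by linarith) (inv_nonneg.mpr h1η.le)
      _ ≤ c + ε := by
          rw [inv_mul_eq_div, div_le_iff₀ h1η]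
          have hηε : η * (2 + 2 * c) ≤ ε := by
            rw [← le_div_iff₀ (by linarith)]
            exact min_le_right _ _
          nlinarith [hη0.le, hc0]

theorem rieszContent_regular : (rieszContent L hadd hsmul hpos).ContentRegular := by
  intro K
  refine le_antisymm (le_iInf₂ fun K' hK' => (rieszContent L hadd hsmul hpos).mono _ _
    (hK'.trans interior_subset)) ?_
  refine ENNReal.le_of_forall_pos_le_add fun ε hε _ => ?_
  obtain ⟨K', hK'1, hK'2⟩ := exists_compact_rcont_le L hadd hsmul hpos K.2
    (ε := (ε : ℝ)) (by exact_mod_cast hε)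
  refine le_trans (iInf₂_le K' hK'1) ?_
  rw [rieszContent_apply, rieszContent_apply]
  calc ENNReal.ofReal (rcont L K') ≤ ENNReal.ofReal (rcont L K + ε) :=
        ENNReal.ofReal_le_ofReal hK'2
    _ = ENNReal.ofReal (rcont L K) + ENNReal.ofReal (ε : ℝ) :=
        ENNReal.ofReal_add (rcont_nonneg L hadd hsmul hpos _) (by positivity)
    _ = ENNReal.ofReal (rcont L K) + ε := by
        rw [ENNReal.ofReal_coe_nnreal]

/-- The measure associated with the functional `L`. -/
noncomputable def rmk : Measure X := (rieszContent L hadd hsmul hpos).measure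

theorem rmk_compact {K : Set X} (hK : IsCompact K) :
    rmk L hadd hsmul hpos K = ENNReal.ofReal (rcont L K) := by
  have := Content.measure_eq_content_of_regular (rieszContent L hadd hsmul hpos)
    (rieszContent_regular L hadd hsmul hpos) ⟨K, hK⟩
  rw [show ((⟨K, hK⟩ : Compacts X) : Set X) = K from rfl] at this
  rw [rmk, this]
  exact rieszContent_apply L hadd hsmul hpos ⟨K, hK⟩

instance : IsFiniteMeasure (rmk L hadd hsmul hpos) := by
  constructor
  rw [rmk_compact L hadd hsmul hpos isCompact_univ]
  exact ENNReal.ofReal_lt_top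

theorem rmk_compact_toReal {K : Set X} (hK : IsCompact K) :
    (rmk L hadd hsmul hpos K).toReal = rcont L K := by
  rw [rmk_compact L hadd hsmul hpos hK,
    ENNReal.toReal_ofReal (rcont_nonneg L hadd hsmul hpos K)]


theorem rmk_integral_eq (f : C(X, ℝ)) (hf0 : ∀ x, 0 ≤ f x) :
    ∫ x, f x ∂(rmk L hadd hsmul hpos) = L f := by
  set q : Measure X := rmk L hadd hsmul hpos with hqdef
  have hqfin : IsFiniteMeasure q := by rw [hqdef]; infer_instance
  set mtot : ℝ := (q Set.univ).toReal with hmtot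
  have key : ∀ n : ℕ, 0 < n → |(∫ x, f x ∂q) - L f| ≤ mtot / n := by
    intro n hn
    have hn' : (0:ℝ) < n := by exact_mod_cast hn
    set M : ℕ := ⌈‖f‖ * n⌉₊ with hM
    have hfM : ∀ x, f x ≤ M / n := by
      intro x
      have h1 : f x ≤ ‖f‖ := f.apply_le_norm x
      have h2 : ‖f‖ * n ≤ M := Nat.le_ceil _
      rw [le_div_iff₀ hn']
      nlinarith
    set θ : ℕ → C(X, ℝ) := fun j =>
      ⟨fun x => min (max (f x - j / n) 0) (1 / n), by
        apply Continuous.min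
        · exact (f.continuous.sub continuous_const).max continuous_const
        · exact continuous_const⟩ with hθdef
    have hθ_apply : ∀ j x, θ j x = min (max (f x - j / n) 0) (1 / n) := fun j x => rfl
    set Kst : ℕ → Set X := fun j => {x | (j:ℝ)/n ≤ f x} with hKst
    have hKcl : ∀ j, IsClosed (Kst j) := fun j => isClosed_le continuous_const f.continuous
    have hKcp : ∀ j, IsCompact (Kst j) := fun j => (hKcl j).isCompact
    have hθ0 : ∀ j x, 0 ≤ θ j x := fun j x =>
      le_min (le_max_right _ _) (by positivity)
    have hθle : ∀ j x, θ j x ≤ 1 / n := fun j x => min_le_right _ _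
    have hθ1 : ∀ j x, x ∈ Kst (j+1) → θ j x = 1 / n := by
      intro j x hx
      have hx' : ((j:ℝ)+1)/n ≤ f x := by exact_mod_cast hx
      rw [hθ_apply, min_eq_right]
      refine le_trans ?_ (le_max_left _ _)
      have hδ : (j:ℝ)/n + 1/n = ((j:ℝ)+1)/n := by ring
      linarith
    have hθnull : ∀ j x, x ∉ Kst j → θ j x = 0 := by
      intro j x hx
      simp only [hKst, Set.mem_setOf_eq, not_le] at hx
      rw [hθ_apply, max_eq_right (by linarith), min_eq_left (by positivity)]
    have hsum : ∀ x, ∑ j ∈ Finset.range M, θ j x = f x := by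
      intro x
      have h1 : ∀ j : ℕ, θ j x = min (max (f x - j * (1/n)) 0) (1/n) := by
        intro j; rw [hθ_apply]; ring_nf
      rw [Finset.sum_congr rfl (fun j _ => h1 j),
        sum_min_max M (f x) (1/n) (hf0 x) (by positivity)]
      apply min_eq_left
      have := hfM x
      rw [mul_one_div]
      exact this
    have hfsum : f = ∑ j ∈ Finset.range M, θ j := by
      ext x
      rw [ContinuousMap.coe_sum, Finset.sum_apply]
      exact (hsum x).symm
    set c : ℕ → ℝ := fun j => rcont L (Kst j) with hc
    have hcm : ∀ j, c j = (q (Kst j)).toReal := fun j =>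
      (rmk_compact_toReal L hadd hsmul hpos (hKcp j)).symm
    have hc0 : ∀ j, 0 ≤ c j := fun j => rcont_nonneg L hadd hsmul hpos _
    -- content-side bounds
    have hA : ∀ j, c (j+1) ≤ n * L (θ j) := by
      intro j
      have hmem : (n:ℝ) • θ j ∈ testSet (Kst (j+1)) := by
        constructor
        · intro x
          simp only [ContinuousMap.smul_apply, smul_eq_mul]
          exact mul_nonneg hn'.le (hθ0 j x)
        · intro x hx
          simp only [ContinuousMap.smul_apply, smul_eq_mul]
          rw [hθ1 j x hx, mul_one_div, div_self hn'.ne']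
      have := rcont_le L hadd hsmul hpos hmem
      rwa [hsmul] at this
    have hB : ∀ j, n * L (θ j) ≤ c j := by
      intro j
      refine le_rcont L hadd hsmul hpos fun g hg => ?_
      have hmono : L ((n:ℝ) • θ j) ≤ L g := by
        refine L_mono L hadd hsmul hpos fun x => ?_
        simp only [ContinuousMap.smul_apply, smul_eq_mul]
        by_cases hx : x ∈ Kst j
        · have h1 := hθle j x
          have h2 := hg.2 x hx
          calc (n:ℝ) * θ j x ≤ n * (1/n) := by
                exact mul_le_mul_of_nonneg_left h1 hn'.le
            _ = 1 := by field_simp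
            _ ≤ g x := h2
        · rw [hθnull j x hx, mul_zero]
          exact hg.1 x
      rwa [hsmul] at hmono
    -- integral-side bounds
    have hintθ : ∀ j, Integrable (θ j) q := by
      intro j
      have := BoundedContinuousFunction.integrable q (BoundedContinuousFunction.mkOfCompact (θ j))
      exact this
    have hA' : ∀ j, c (j+1) ≤ n * ∫ x, θ j x ∂q := by
      intro j
      have hle : ∀ x, (Kst (j+1)).indicator (fun _ => (1:ℝ)) x ≤ (n:ℝ) * θ j x := by
        intro x
        by_cases hx : x ∈ Kst (j+1)
        · rw [Set.indicator_of_mem hx, hθ1 j x hx, mul_one_div, div_self hn'.ne']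
        · rw [Set.indicator_of_notMem hx]
          exact mul_nonneg hn'.le (hθ0 j x)
      have hint : ∫ x, (Kst (j+1)).indicator (fun _ => (1:ℝ)) x ∂q
          ≤ ∫ x, (n:ℝ) * θ j x ∂q := by
        refine integral_mono ?_ ((hintθ j).const_mul _) hle
        exact (integrable_const (1:ℝ)).indicator (hKcl (j+1)).measurableSet
      rw [integral_indicator_const _ (hKcl (j+1)).measurableSet, smul_eq_mul, mul_one,
        integral_const_mul] at hint
      rw [hcm (j+1)]
      exact hint
    have hB' : ∀ j, n * ∫ x, θ j x ∂q ≤ c j := by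
      intro j
      have hle : ∀ x, (n:ℝ) * θ j x ≤ (Kst j).indicator (fun _ => (1:ℝ)) x := by
        intro x
        by_cases hx : x ∈ Kst j
        · rw [Set.indicator_of_mem hx]
          calc (n:ℝ) * θ j x ≤ n * (1/n) := mul_le_mul_of_nonneg_left (hθle j x) hn'.le
            _ = 1 := by field_simp
        · rw [Set.indicator_of_notMem hx, hθnull j x hx, mul_zero]
      have hint : ∫ x, (n:ℝ) * θ j x ∂q
          ≤ ∫ x, (Kst j).indicator (fun _ => (1:ℝ)) x ∂q := by
        refine integral_mono ((hintθ j).const_mul _) ?_ hle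
        exact (integrable_const (1:ℝ)).indicator (hKcl j).measurableSet
      rw [integral_indicator_const _ (hKcl j).measurableSet, smul_eq_mul, mul_one,
        integral_const_mul] at hint
      rw [hcm j]
      exact hint
    -- summation
    have hLf : L f = ∑ j ∈ Finset.range M, L (θ j) := by
      rw [hfsum, L_sum L hadd hsmul hpos]
    have hIf : ∫ x, f x ∂q = ∑ j ∈ Finset.range M, ∫ x, θ j x ∂q := by
      have h1 : ∫ x, f x ∂q = ∫ x, (∑ j ∈ Finset.range M, θ j x) ∂q := by
        apply integral_congr_ae
        exact Filter.Eventually.of_forall fun x => (hsum x).symm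
      rw [h1, integral_finset_sum _ (fun j _ => hintθ j)]
    set S0 : ℝ := ∑ j ∈ Finset.range M, c j with hS0
    set S1 : ℝ := ∑ j ∈ Finset.range M, c (j+1) with hS1
    have hgap : S0 - S1 ≤ mtot := by
      have h1 : ∑ j ∈ Finset.range (M+1), c j = S0 + c M := Finset.sum_range_succ c M
      have h2 : ∑ j ∈ Finset.range (M+1), c j = S1 + c 0 := Finset.sum_range_succ' c M
      have h3 : c 0 ≤ mtot := by
        rw [hcm 0, hmtot]
        exact ENNReal.toReal_mono (measure_ne_top q _) (measure_mono (Set.subset_univ _))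
      have h4 := hc0 M
      linarith
    have hL1 : S1 ≤ n * L f := by
      rw [hLf, Finset.mul_sum]
      exact Finset.sum_le_sum fun j _ => hA j
    have hL2 : n * L f ≤ S0 := by
      rw [hLf, Finset.mul_sum]
      exact Finset.sum_le_sum fun j _ => hB j
    have hI1 : S1 ≤ n * ∫ x, f x ∂q := by
      rw [hIf, Finset.mul_sum]
      exact Finset.sum_le_sum fun j _ => hA' j
    have hI2 : n * ∫ x, f x ∂q ≤ S0 := by
      rw [hIf, Finset.mul_sum]
      exact Finset.sum_le_sum fun j _ => hB' j
    rw [le_div_iff₀ hn']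
    have : |(∫ x, f x ∂q) - L f| * n = |n * ∫ x, f x ∂q - n * L f| := by
      rw [← mul_sub, abs_mul, abs_of_pos hn', mul_comm]
    rw [this, abs_le]
    constructor <;> linarith
  have htend : Tendsto (fun n : ℕ => mtot / n) atTop (nhds 0) :=
    tendsto_const_div_atTop_nhds_zero_nat mtot
  have habs : |(∫ x, f x ∂q) - L f| ≤ 0 :=
    ge_of_tendsto htend (eventually_atTop.mpr ⟨1, fun n hn => key n hn⟩)
  have := abs_nonneg ((∫ x, f x ∂q) - L f)
  have h0 : (∫ x, f x ∂q) - L f = 0 := by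
    rw [← abs_eq_zero]; linarith
  linarith


omit hadd hsmul hpos

/-- helper bound on integrals against finite measures -/
theorem integral_cm_bound (p : Measure X) [IsFiniteMeasure p] {C : ℝ}
    (hC : (p Set.univ).toReal ≤ C) (f : C(X, ℝ)) :
    |∫ x, f x ∂p| ≤ C * ‖f‖ := by
  have h := BoundedContinuousFunction.norm_integral_le_mul_norm p
    (BoundedContinuousFunction.mkOfCompact f)
  have hn : ‖BoundedContinuousFunction.mkOfCompact f‖ = ‖f‖ := rfl
  have h0 : (0:ℝ) ≤ (p Set.univ).toReal := ENNReal.toReal_nonneg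
  have hint : ∫ x, (BoundedContinuousFunction.mkOfCompact f) x ∂p = ∫ x, f x ∂p := rfl
  rw [hint, hn] at h
  calc |∫ x, f x ∂p| ≤ (p Set.univ).toReal * ‖f‖ := h
    _ ≤ C * ‖f‖ := by
        have := norm_nonneg f
        nlinarith

/-- The sequential weak-* compactness result: any uniformly bounded sequence of finite
measures on a compact metric space has a subsequence converging weakly against all
continuous test functions, with limit a finite measure. -/
theorem exists_subseq_tendsto_integral (p : ℕ → Measure X)
    (hfin : ∀ k, IsFiniteMeasure (p k)) (C : ℝ)
    (hC : ∀ k, ((p k) Set.univ).toReal ≤ C) :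
    ∃ φ : ℕ → ℕ, StrictMono φ ∧ ∃ q : Measure X, IsFiniteMeasure q ∧
      ∀ f : C(X, ℝ), Filter.Tendsto (fun k => ∫ x, f x ∂(p (φ k)))
        Filter.atTop (nhds (∫ x, f x ∂q)) := by
  haveI := hfin
  have hC0 : 0 ≤ C := le_trans ENNReal.toReal_nonneg (hC 0)
  -- dense sequence of test functions
  set D : ℕ → C(X, ℝ) := TopologicalSpace.denseSeq C(X, ℝ) with hD
  have hDdense : DenseRange D := TopologicalSpace.denseRange_denseSeq _
  -- the sequence of integral vectors lies in a compact box
  set B : ℕ → ℝ := fun i => C * ‖D i‖ with hB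
  set y : ℕ → (ℕ → ℝ) := fun k i => ∫ x, (D i) x ∂(p k) with hy
  have hybox : ∀ k, y k ∈ Set.pi Set.univ (fun i => Set.Icc (-(B i)) (B i)) := by
    intro k
    intro i _
    have := integral_cm_bound (p k) (hC k) (D i)
    rw [abs_le] at this
    exact ⟨this.1, this.2⟩
  have hcpt : IsCompact (Set.pi Set.univ (fun i : ℕ => Set.Icc (-(B i)) (B i))) :=
    isCompact_univ_pi fun i => isCompact_Icc
  obtain ⟨a, -, φ, hφmono, hφtend⟩ := hcpt.isSeqCompact hybox
  have hcoord : ∀ i, Filter.Tendsto (fun k => ∫ x, (D i) x ∂(p (φ k)))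
      Filter.atTop (nhds (a i)) := by
    intro i
    exact (tendsto_pi_nhds.mp hφtend) i
  -- for every f, the subsequence of integrals is Cauchy
  have hcauchy : ∀ f : C(X, ℝ), ∃ l : ℝ,
      Filter.Tendsto (fun k => ∫ x, f x ∂(p (φ k))) Filter.atTop (nhds l) := by
    intro f
    apply cauchySeq_tendsto_of_complete
    rw [Metric.cauchySeq_iff]
    intro ε hε
    obtain ⟨i, hi⟩ := (Metric.denseRange_iff.mp hDdense) f (ε / (4 * (C + 1)))
      (by positivity)
    have hkey : ∀ k, |(∫ x, f x ∂(p (φ k))) - ∫ x, (D i) x ∂(p (φ k))| ≤ ε / 4 := by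
      intro k
      have h2 := integral_cm_bound (p (φ k)) (hC (φ k)) (f - D i)
      simp only [ContinuousMap.sub_apply] at h2
      have hif : Integrable (⇑f) (p (φ k)) := by
        exact BoundedContinuousFunction.integrable (p (φ k))
          (BoundedContinuousFunction.mkOfCompact f)
      have hig : Integrable (⇑(D i)) (p (φ k)) := by
        exact BoundedContinuousFunction.integrable (p (φ k))
          (BoundedContinuousFunction.mkOfCompact (D i))
      rw [integral_sub hif hig] at h2
      have h3 : ‖f - D i‖ = dist f (D i) := by rw [dist_eq_norm]
      rw [h3] at h2
      have hd : dist f (D i) ≤ ε / (4 * (C + 1)) := hi.le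
      have h41 : (0:ℝ) < 4 * (C + 1) := by linarith
      calc |(∫ x, f x ∂(p (φ k))) - ∫ x, (D i) x ∂(p (φ k))| ≤ C * dist f (D i) := h2
        _ ≤ C * (ε / (4 * (C + 1))) := mul_le_mul_of_nonneg_left hd hC0
        _ ≤ ε / 4 := by
            rw [mul_comm C, div_mul_eq_mul_div, div_le_div_iff₀ h41 (by norm_num : (0:ℝ) < 4)]
            nlinarith [hε.le, hC0]
    -- the i-th coordinate sequence converges hence is Cauchy
    have hco := hcoord i
    have hcoC : CauchySeq (fun k => ∫ x, (D i) x ∂(p (φ k))) := hco.cauchySeq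
    rw [Metric.cauchySeq_iff] at hcoC
    obtain ⟨N, hN⟩ := hcoC (ε / 4) (by positivity)
    refine ⟨N, fun m hm l hl => ?_⟩
    have h4 := hkey m
    have h5 := hkey l
    have h6 := hN m hm l hl
    rw [Real.dist_eq] at h6 ⊢
    have : (∫ x, f x ∂(p (φ m))) - (∫ x, f x ∂(p (φ l)))
        = ((∫ x, f x ∂(p (φ m))) - ∫ x, (D i) x ∂(p (φ m)))
          + ((∫ x, (D i) x ∂(p (φ m))) - ∫ x, (D i) x ∂(p (φ l)))
          - ((∫ x, f x ∂(p (φ l))) - ∫ x, (D i) x ∂(p (φ l))) := by ring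
    rw [this]
    calc |_| ≤ |(∫ x, f x ∂(p (φ m))) - ∫ x, (D i) x ∂(p (φ m))|
          + |(∫ x, (D i) x ∂(p (φ m))) - ∫ x, (D i) x ∂(p (φ l))|
          + |(∫ x, f x ∂(p (φ l))) - ∫ x, (D i) x ∂(p (φ l))| := by
            apply (abs_sub _ _).trans
            gcongr
            exact abs_add_le _ _
      _ < ε / 4 + ε / 4 + ε / 4 := by
            apply add_lt_add_of_lt_of_le
            apply add_lt_add_of_le_of_lt h4 h6
            exact h5
      _ < ε := by linarith
  choose Lf hLf using hcauchy
  -- Lf is linear positive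
  have hadd' : ∀ f g, Lf (f + g) = Lf f + Lf g := by
    intro f g
    have h1 : Filter.Tendsto (fun k => ∫ x, (f + g) x ∂(p (φ k)))
        Filter.atTop (nhds (Lf f + Lf g)) := by
      have := (hLf f).add (hLf g)
      apply this.congr
      intro k
      have hif : Integrable (⇑f) (p (φ k)) := by
        exact BoundedContinuousFunction.integrable (p (φ k))
          (BoundedContinuousFunction.mkOfCompact f)
      have hig : Integrable (⇑g) (p (φ k)) := by
        exact BoundedContinuousFunction.integrable (p (φ k))
          (BoundedContinuousFunction.mkOfCompact g)
      simp only [ContinuousMap.add_apply]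
      rw [integral_add hif hig]
    exact tendsto_nhds_unique (hLf (f + g)) h1
  have hsmul' : ∀ (c : ℝ) f, Lf (c • f) = c * Lf f := by
    intro c f
    have h1 : Filter.Tendsto (fun k => ∫ x, (c • f) x ∂(p (φ k)))
        Filter.atTop (nhds (c * Lf f)) := by
      have := (hLf f).const_mul c
      apply this.congr
      intro k
      simp only [ContinuousMap.smul_apply, smul_eq_mul]
      rw [MeasureTheory.integral_const_mul]
    exact tendsto_nhds_unique (hLf (c • f)) h1
  have hpos' : ∀ f : C(X, ℝ), (∀ x, 0 ≤ f x) → 0 ≤ Lf f := by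
    intro f hf
    refine ge_of_tendsto (hLf f) (Filter.Eventually.of_forall fun k => ?_)
    exact integral_nonneg fun x => hf x
  refine ⟨φ, hφmono, rmk Lf hadd' hsmul' hpos', inferInstance, fun f => ?_⟩
  -- identify the limit of integrals with the integral against the measure
  have hrep : ∫ x, f x ∂(rmk Lf hadd' hsmul' hpos') = Lf f := by
    have hplus : ∀ x, 0 ≤ (f ⊔ 0) x := fun x => by
      simp [ContinuousMap.sup_apply]
    have hminus : ∀ x, 0 ≤ ((-f) ⊔ 0) x := fun x => by
      simp [ContinuousMap.sup_apply]
    have hsplit : f + ((-f) ⊔ 0) = f ⊔ 0 := by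
      ext x
      simp only [ContinuousMap.add_apply, ContinuousMap.sup_apply, ContinuousMap.neg_apply,
        ContinuousMap.zero_apply]
      rcases le_total (f x) 0 with h | h
      · rw [sup_eq_right.mpr h, sup_eq_left.mpr (by linarith : (0:ℝ) ≤ -f x)]
        ring
      · rw [sup_eq_left.mpr h, sup_eq_right.mpr (by linarith : -f x ≤ (0:ℝ))]
        ring
    have hLsplit : Lf f = Lf (f ⊔ 0) - Lf ((-f) ⊔ 0) := by
      have := hadd' f ((-f) ⊔ 0)
      rw [hsplit] at this
      linarith
    have hIsplit : ∫ x, f x ∂(rmk Lf hadd' hsmul' hpos')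
        = (∫ x, (f ⊔ 0) x ∂(rmk Lf hadd' hsmul' hpos'))
          - ∫ x, ((-f) ⊔ 0) x ∂(rmk Lf hadd' hsmul' hpos') := by
      rw [← integral_sub]
      · apply integral_congr_ae
        refine Filter.Eventually.of_forall fun x => ?_
        have h9 := congrArg (fun g : C(X,ℝ) => g x) hsplit
        simp only [ContinuousMap.add_apply] at h9
        simp only [Pi.sub_apply]
        linarith
      · exact BoundedContinuousFunction.integrable (rmk Lf hadd' hsmul' hpos')
          (BoundedContinuousFunction.mkOfCompact (f ⊔ 0))
      · exact BoundedContinuousFunction.integrable (rmk Lf hadd' hsmul' hpos')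
          (BoundedContinuousFunction.mkOfCompact ((-f) ⊔ 0))
    rw [hIsplit, hLsplit,
      rmk_integral_eq Lf hadd' hsmul' hpos' (f ⊔ 0) hplus,
      rmk_integral_eq Lf hadd' hsmul' hpos' ((-f) ⊔ 0) hminus]
  rw [hrep]
  exact hLf f


section SignedPart

-- integrability of continuous maps against finite measures, convenience
theorem cm_integrable (q : Measure X) [IsFiniteMeasure q] (f : C(X, ℝ)) :
    Integrable (⇑f) q := by
  exact BoundedContinuousFunction.integrable q (BoundedContinuousFunction.mkOfCompact f)

/-- The balancing identity for the Jordan decomposition of a difference of finite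
measures. -/
theorem jordan_balance (p n : Measure X) [IsFiniteMeasure p] [IsFiniteMeasure n] :
    (p.toSignedMeasure - n.toSignedMeasure).toJordanDecomposition.posPart + n
      = (p.toSignedMeasure - n.toSignedMeasure).toJordanDecomposition.negPart + p := by
  set s := p.toSignedMeasure - n.toSignedMeasure with hs
  have hdec := s.toSignedMeasure_toJordanDecomposition
  ext A hA
  have h1 : s.toJordanDecomposition.posPart.toSignedMeasure A
      - s.toJordanDecomposition.negPart.toSignedMeasure A = s A := by
    rw [← VectorMeasure.sub_apply]
    rw [MeasureTheory.JordanDecomposition.toSignedMeasure] at hdec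
    rw [hdec]
  have h2 : s A = p.toSignedMeasure A - n.toSignedMeasure A := by
    rw [hs, VectorMeasure.sub_apply]
  rw [Measure.toSignedMeasure_apply_measurable hA,
    Measure.toSignedMeasure_apply_measurable hA] at h1
  rw [Measure.toSignedMeasure_apply_measurable hA,
    Measure.toSignedMeasure_apply_measurable hA] at h2
  have h3 : (s.toJordanDecomposition.posPart A).toReal + (n A).toReal
      = (s.toJordanDecomposition.negPart A).toReal + (p A).toReal := by
    rw [h2] at h1
    simp only [measureReal_def] at h1
    linarith
  have h4 : ((s.toJordanDecomposition.posPart + n) A).toReal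
      = ((s.toJordanDecomposition.negPart + p) A).toReal := by
    rw [Measure.add_apply, Measure.add_apply,
      ENNReal.toReal_add (measure_ne_top _ _) (measure_ne_top _ _),
      ENNReal.toReal_add (measure_ne_top _ _) (measure_ne_top _ _)]
    exact h3
  rw [Measure.add_apply, Measure.add_apply]
  have hfin1 : (s.toJordanDecomposition.posPart A + n A) ≠ ⊤ :=
    ENNReal.add_ne_top.mpr ⟨measure_ne_top _ _, measure_ne_top _ _⟩
  have hfin2 : (s.toJordanDecomposition.negPart A + p A) ≠ ⊤ :=
    ENNReal.add_ne_top.mpr ⟨measure_ne_top _ _, measure_ne_top _ _⟩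
  rw [Measure.add_apply, Measure.add_apply] at h4
  exact (ENNReal.toReal_eq_toReal_iff' hfin1 hfin2).mp h4

/-- sInt of a difference of finite measures. -/
theorem sInt_sub_eq (p n : Measure X) [IsFiniteMeasure p] [IsFiniteMeasure n] (f : C(X, ℝ)) :
    sInt (p.toSignedMeasure - n.toSignedMeasure) f = (∫ x, f x ∂p) - ∫ x, f x ∂n := by
  have hbal := jordan_balance p n
  have h1 : ∫ x, f x ∂((p.toSignedMeasure - n.toSignedMeasure).toJordanDecomposition.posPart + n)
      = ∫ x, f x ∂((p.toSignedMeasure - n.toSignedMeasure).toJordanDecomposition.negPart + p) := by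
    rw [hbal]
  rw [integral_add_measure (cm_integrable _ f) (cm_integrable _ f),
    integral_add_measure (cm_integrable _ f) (cm_integrable _ f)] at h1
  rw [sInt]
  linarith

/-- TV norm as a sum of Jordan masses. -/
theorem tvNorm_eq_jordan (μ : SignedMeasure X) :
    tvNorm μ = (μ.toJordanDecomposition.posPart Set.univ).toReal
      + (μ.toJordanDecomposition.negPart Set.univ).toReal := by
  rw [tvNorm, SignedMeasure.totalVariation, Measure.add_apply,
    ENNReal.toReal_add (measure_ne_top _ _) (measure_ne_top _ _)]

/-- TV norm bound for a difference of finite measures. -/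
theorem tvNorm_sub_le (p n : Measure X) [IsFiniteMeasure p] [IsFiniteMeasure n] :
    tvNorm (p.toSignedMeasure - n.toSignedMeasure)
      ≤ (p Set.univ).toReal + (n Set.univ).toReal := by
  set s := p.toSignedMeasure - n.toSignedMeasure with hs
  obtain ⟨A, hA, hposA, hnegA⟩ := s.toJordanDecomposition.mutuallySingular
  have hbal := jordan_balance p n
  have hApos : s.toJordanDecomposition.posPart Set.univ ≤ p Set.univ := by
    have h1 : s.toJordanDecomposition.posPart Set.univ
        = s.toJordanDecomposition.posPart Aᶜ := by
      rw [← measure_add_measure_compl hA, hposA, zero_add]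
    have h2 : (s.toJordanDecomposition.posPart + n) Aᶜ
        = (s.toJordanDecomposition.negPart + p) Aᶜ := by rw [hbal]
    rw [Measure.add_apply, Measure.add_apply, hnegA, zero_add] at h2
    calc s.toJordanDecomposition.posPart Set.univ
        = s.toJordanDecomposition.posPart Aᶜ := h1
      _ ≤ s.toJordanDecomposition.posPart Aᶜ + n Aᶜ := le_self_add
      _ = p Aᶜ := h2
      _ ≤ p Set.univ := measure_mono (Set.subset_univ _)
  have hAneg : s.toJordanDecomposition.negPart Set.univ ≤ n Set.univ := by
    have h1 : s.toJordanDecomposition.negPart Set.univ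
        = s.toJordanDecomposition.negPart A := by
      rw [← measure_add_measure_compl hA, hnegA, add_zero]
    have h2 : (s.toJordanDecomposition.posPart + n) A
        = (s.toJordanDecomposition.negPart + p) A := by rw [hbal]
    rw [Measure.add_apply, Measure.add_apply, hposA, zero_add] at h2
    calc s.toJordanDecomposition.negPart Set.univ
        = s.toJordanDecomposition.negPart A := h1
      _ ≤ s.toJordanDecomposition.negPart A + p A := le_self_add
      _ = n A := h2.symm
      _ ≤ n Set.univ := measure_mono (Set.subset_univ _)
  rw [tvNorm_eq_jordan]
  have := ENNReal.toReal_mono (measure_ne_top p _) hApos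
  have := ENNReal.toReal_mono (measure_ne_top n _) hAneg
  linarith

/-- Two finite measures agreeing on integrals of all continuous functions are equal. -/
theorem measure_ext_of_integral_eq (m₁ m₂ : Measure X) [IsFiniteMeasure m₁] [IsFiniteMeasure m₂]
    (h : ∀ f : C(X, ℝ), ∫ x, f x ∂m₁ = ∫ x, f x ∂m₂) : m₁ = m₂ := by
  apply MeasureTheory.ext_of_forall_lintegral_eq_of_IsFiniteMeasure
  intro g
  have hg : ∀ (m : Measure X) [IsFiniteMeasure m], ∫⁻ x, (g x : ℝ≥0∞) ∂m ≠ ⊤ := by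
    intro m _
    exact (BoundedContinuousFunction.lintegral_lt_top_of_nnreal m g).ne
  have hcont : Continuous fun x => (g x : ℝ) := NNReal.continuous_coe.comp g.continuous
  have hfc := h ⟨fun x => (g x : ℝ), hcont⟩
  have h1 : ∀ (m : Measure X) [IsFiniteMeasure m],
      (∫⁻ x, (g x : ℝ≥0∞) ∂m).toReal = ∫ x, ((⟨fun x => (g x : ℝ), hcont⟩ : C(X, ℝ)) x) ∂m := by
    intro m _
    have := BoundedContinuousFunction.toReal_lintegral_coe_eq_integral g m
    rw [this]
    rfl
  have h2 := (h1 m₁).trans (hfc.trans (h1 m₂).symm)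
  exact (ENNReal.toReal_eq_toReal_iff' (hg m₁) (hg m₂)).mp h2

/-- Two signed measures with the same `sInt` pairings are equal. -/
theorem signed_ext_of_sInt_eq (μ ν : SignedMeasure X)
    (h : ∀ f : C(X, ℝ), sInt μ f = sInt ν f) : μ = ν := by
  have hmeas : μ.toJordanDecomposition.posPart + ν.toJordanDecomposition.negPart
      = ν.toJordanDecomposition.posPart + μ.toJordanDecomposition.negPart := by
    apply measure_ext_of_integral_eq
    intro f
    have hf := h f
    rw [sInt, sInt] at hf
    rw [integral_add_measure (cm_integrable _ f) (cm_integrable _ f),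
      integral_add_measure (cm_integrable _ f) (cm_integrable _ f)]
    linarith
  ext A hA
  have happ : ∀ (ρ : SignedMeasure X), ρ A = (ρ.toJordanDecomposition.posPart A).toReal
      - (ρ.toJordanDecomposition.negPart A).toReal := by
    intro ρ
    have hdec := ρ.toSignedMeasure_toJordanDecomposition
    rw [MeasureTheory.JordanDecomposition.toSignedMeasure] at hdec
    conv_lhs => rw [← hdec]
    rw [VectorMeasure.sub_apply, Measure.toSignedMeasure_apply_measurable hA,
      Measure.toSignedMeasure_apply_measurable hA]
    rfl
  have hmA : μ.toJordanDecomposition.posPart A + ν.toJordanDecomposition.negPart A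
      = ν.toJordanDecomposition.posPart A + μ.toJordanDecomposition.negPart A := by
    rw [← Measure.add_apply, ← Measure.add_apply, hmeas]
  have hmA' : (μ.toJordanDecomposition.posPart A).toReal
      + (ν.toJordanDecomposition.negPart A).toReal
      = (ν.toJordanDecomposition.posPart A).toReal
      + (μ.toJordanDecomposition.negPart A).toReal := by
    rw [← ENNReal.toReal_add (measure_ne_top _ _) (measure_ne_top _ _),
      ← ENNReal.toReal_add (measure_ne_top _ _) (measure_ne_top _ _), hmA]
  rw [happ μ, happ ν]
  linarith

end SignedPart

end Stmt15Aux

/-- Tikhonov convergence: if `‖ζ_n‖ → 0`, `λ_n → 0`, `‖ζ_n‖²/λ_n → 0`, then any sequence of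
minimizers of `μ ↦ ½‖Kμ − (y₀ + ζ_n)‖² + λ_n ‖μ‖_TV` has a weak*-convergent subsequence,
and every weak* limit point minimizes `‖μ‖_TV` subject to `Kμ = y₀`. -/
theorem stmt15 {X : Type*} [MetricSpace X] [CompactSpace X] [MeasurableSpace X] [BorelSpace X]
    {Y : Type*} [NormedAddCommGroup Y] [InnerProductSpace ℝ Y] [CompleteSpace Y]
    (K : SignedMeasure X →ₗ[ℝ] Y)
    (hK : ∀ (μs : ℕ → SignedMeasure X) (μ : SignedMeasure X),
      WeakStarTendsto μs μ →
        Filter.Tendsto (fun k => K (μs k)) Filter.atTop (nhds (K μ)))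
    (y₀ : Y) (μbar : SignedMeasure X) (hfeas : K μbar = y₀)
    (ζ : ℕ → Y) (lam : ℕ → ℝ) (hlam : ∀ k, 0 < lam k)
    (hζ0 : Filter.Tendsto (fun k => ‖ζ k‖) Filter.atTop (nhds 0))
    (hlam0 : Filter.Tendsto lam Filter.atTop (nhds 0))
    (hrate : Filter.Tendsto (fun k => ‖ζ k‖ ^ 2 / lam k) Filter.atTop (nhds 0))
    (μs : ℕ → SignedMeasure X)
    (hmin : ∀ k, ∀ ν : SignedMeasure X,
      (1 / 2) * ‖K (μs k) - (y₀ + ζ k)‖ ^ 2 + lam k * tvNorm (μs k)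
        ≤ (1 / 2) * ‖K ν - (y₀ + ζ k)‖ ^ 2 + lam k * tvNorm ν) :
    (∃ (φ : ℕ → ℕ) (μlim : SignedMeasure X), StrictMono φ ∧
        WeakStarTendsto (fun k => μs (φ k)) μlim) ∧
    (∀ (φ : ℕ → ℕ) (μlim : SignedMeasure X), StrictMono φ →
        WeakStarTendsto (fun k => μs (φ k)) μlim →
          K μlim = y₀ ∧ ∀ ν : SignedMeasure X, K ν = y₀ → tvNorm μlim ≤ tvNorm ν) := by
  classical
  have htv0 : ∀ ν : SignedMeasure X, 0 ≤ tvNorm ν := fun ν => ENNReal.toReal_nonneg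
  -- the fundamental bound obtained by testing the minimality against a feasible point
  have hbound : ∀ k, ∀ ν : SignedMeasure X, K ν = y₀ →
      tvNorm (μs k) ≤ ‖ζ k‖ ^ 2 / (2 * lam k) + tvNorm ν := by
    intro k ν hν
    have h1 := hmin k ν
    have h2 : K ν - (y₀ + ζ k) = -(ζ k) := by rw [hν]; abel
    rw [h2, norm_neg] at h1
    have h3 : 0 ≤ ‖K (μs k) - (y₀ + ζ k)‖ ^ 2 := sq_nonneg _
    have hlamk := hlam k
    have h4 : lam k * tvNorm (μs k) ≤ (1/2) * ‖ζ k‖ ^ 2 + lam k * tvNorm ν := by linarith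
    have h5 : tvNorm (μs k) ≤ ((1/2) * ‖ζ k‖ ^ 2 + lam k * tvNorm ν) / lam k := by
      rw [le_div_iff₀ hlamk]
      calc tvNorm (μs k) * lam k = lam k * tvNorm (μs k) := mul_comm _ _
        _ ≤ _ := h4
    have h6 : ((1/2) * ‖ζ k‖ ^ 2 + lam k * tvNorm ν) / lam k
        = ‖ζ k‖ ^ 2 / (2 * lam k) + tvNorm ν := by
      field_simp
    rw [h6] at h5
    exact h5
  -- convergence of K (μs k) to y₀
  have hsq : ∀ k, ‖K (μs k) - (y₀ + ζ k)‖ ^ 2 ≤ ‖ζ k‖ ^ 2 + 2 * lam k * tvNorm μbar := by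
    intro k
    have h1 := hmin k μbar
    have h2 : K μbar - (y₀ + ζ k) = -(ζ k) := by rw [hfeas]; abel
    rw [h2, norm_neg] at h1
    have h3 := htv0 (μs k)
    have h4 := (hlam k).le
    nlinarith
  have hnormb : ∀ k, ‖K (μs k) - y₀‖
      ≤ Real.sqrt (‖ζ k‖ ^ 2 + 2 * lam k * tvNorm μbar) + ‖ζ k‖ := by
    intro k
    have h1 : ‖K (μs k) - y₀‖ ≤ ‖K (μs k) - (y₀ + ζ k)‖ + ‖ζ k‖ := by
      have h2 : K (μs k) - y₀ = (K (μs k) - (y₀ + ζ k)) + ζ k := by abel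
      rw [h2]
      exact norm_add_le _ _
    have h3 : ‖K (μs k) - (y₀ + ζ k)‖
        ≤ Real.sqrt (‖ζ k‖ ^ 2 + 2 * lam k * tvNorm μbar) := by
      rw [← Real.sqrt_sq (norm_nonneg (K (μs k) - (y₀ + ζ k)))]
      exact Real.sqrt_le_sqrt (hsq k)
    linarith
  have hub0 : Filter.Tendsto
      (fun k => Real.sqrt (‖ζ k‖ ^ 2 + 2 * lam k * tvNorm μbar) + ‖ζ k‖)
      Filter.atTop (nhds 0) := by
    have hz2 : Filter.Tendsto (fun k => ‖ζ k‖ ^ 2) Filter.atTop (nhds 0) := by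
      have := hζ0.mul hζ0
      simpa [pow_two] using this
    have hl2 : Filter.Tendsto (fun k => 2 * lam k * tvNorm μbar) Filter.atTop (nhds 0) := by
      have := (hlam0.const_mul 2).mul_const (tvNorm μbar)
      simpa using this
    have h1 : Filter.Tendsto (fun k => ‖ζ k‖ ^ 2 + 2 * lam k * tvNorm μbar)
        Filter.atTop (nhds 0) := by
      simpa using hz2.add hl2
    have h2 := h1.sqrt
    rw [Real.sqrt_zero] at h2
    simpa using h2.add hζ0
  have hKconv : Filter.Tendsto (fun k => K (μs k)) Filter.atTop (nhds y₀) := by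
    rw [tendsto_iff_norm_sub_tendsto_zero]
    exact squeeze_zero (fun k => norm_nonneg _) hnormb hub0
  -- uniform bound on total variations
  obtain ⟨Mr, hMr⟩ : ∃ M : ℝ, ∀ k, ‖ζ k‖ ^ 2 / lam k ≤ M := by
    obtain ⟨M, hM⟩ := hrate.bddAbove_range
    exact ⟨M, fun k => hM ⟨k, rfl⟩⟩
  set Cb : ℝ := Mr / 2 + tvNorm μbar with hCbdef
  have hCb : ∀ k, tvNorm (μs k) ≤ Cb := by
    intro k
    have h1 := hbound k μbar hfeas
    have h2 : ‖ζ k‖ ^ 2 / (2 * lam k) = (‖ζ k‖ ^ 2 / lam k) / 2 := by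
      rw [div_div]
      ring_nf
    rw [h2] at h1
    have h3 := hMr k
    rw [hCbdef]
    linarith
  -- Jordan parts
  set p : ℕ → Measure X := fun k => (μs k).toJordanDecomposition.posPart with hpdef
  set n : ℕ → Measure X := fun k => (μs k).toJordanDecomposition.negPart with hndef
  have hfinp : ∀ k, IsFiniteMeasure (p k) := fun k => by rw [hpdef]; infer_instance
  have hfinn : ∀ k, IsFiniteMeasure (n k) := fun k => by rw [hndef]; infer_instance
  have htveq : ∀ k, tvNorm (μs k) = ((p k) Set.univ).toReal + ((n k) Set.univ).toReal :=
    fun k => Stmt15Aux.tvNorm_eq_jordan (μs k)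
  have hpC : ∀ k, ((p k) Set.univ).toReal ≤ Cb := by
    intro k
    have h1 := htveq k
    have h2 := hCb k
    have h3 : 0 ≤ ((n k) Set.univ).toReal := ENNReal.toReal_nonneg
    linarith
  have hnC : ∀ k, ((n k) Set.univ).toReal ≤ Cb := by
    intro k
    have h1 := htveq k
    have h2 := hCb k
    have h3 : 0 ≤ ((p k) Set.univ).toReal := ENNReal.toReal_nonneg
    linarith
  have hsInt : ∀ (j : ℕ) (f : C(X, ℝ)),
      sInt (μs j) f = (∫ x, f x ∂(p j)) - ∫ x, f x ∂(n j) := fun j f => rfl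
  constructor
  · -- existence of a weak* convergent subsequence
    obtain ⟨φ₁, hφ₁, q₁, hq₁fin, hq₁⟩ :=
      Stmt15Aux.exists_subseq_tendsto_integral p hfinp Cb hpC
    obtain ⟨φ₂, hφ₂, q₂, hq₂fin, hq₂⟩ :=
      Stmt15Aux.exists_subseq_tendsto_integral (fun k => n (φ₁ k))
        (fun k => hfinn (φ₁ k)) Cb (fun k => hnC (φ₁ k))
    haveI := hq₁fin
    haveI := hq₂fin
    refine ⟨φ₁ ∘ φ₂, q₁.toSignedMeasure - q₂.toSignedMeasure, hφ₁.comp hφ₂, fun f => ?_⟩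
    have hp' : Filter.Tendsto (fun k => ∫ x, f x ∂(p (φ₁ (φ₂ k)))) Filter.atTop
        (nhds (∫ x, f x ∂q₁)) := (hq₁ f).comp hφ₂.tendsto_atTop
    have hn' := hq₂ f
    have h1 := hp'.sub hn'
    rw [Stmt15Aux.sInt_sub_eq q₁ q₂ f]
    apply h1.congr
    intro k
    rw [hsInt]
    rfl
  · -- every weak* limit point is a minimizer
    intro φ μlim hφ hweak
    constructor
    · exact tendsto_nhds_unique (hK _ _ hweak) (hKconv.comp hφ.tendsto_atTop)
    · intro ν hν
      obtain ⟨ψ₁, hψ₁, r₁, hr₁fin, hr₁⟩ :=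
        Stmt15Aux.exists_subseq_tendsto_integral (fun k => p (φ k))
          (fun k => hfinp (φ k)) Cb (fun k => hpC (φ k))
      obtain ⟨ψ₂, hψ₂, r₂, hr₂fin, hr₂⟩ :=
        Stmt15Aux.exists_subseq_tendsto_integral (fun k => n (φ (ψ₁ k)))
          (fun k => hfinn (φ (ψ₁ k))) Cb (fun k => hnC (φ (ψ₁ k)))
      haveI := hr₁fin
      haveI := hr₂fin
      set σ : ℕ → ℕ := fun k => φ (ψ₁ (ψ₂ k)) with hσdef
      have hσp : ∀ f : C(X, ℝ), Filter.Tendsto (fun k => ∫ x, f x ∂(p (σ k)))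
          Filter.atTop (nhds (∫ x, f x ∂r₁)) := fun f => (hr₁ f).comp hψ₂.tendsto_atTop
      have hσn : ∀ f : C(X, ℝ), Filter.Tendsto (fun k => ∫ x, f x ∂(n (σ k)))
          Filter.atTop (nhds (∫ x, f x ∂r₂)) := fun f => hr₂ f
      have hEq : μlim = r₁.toSignedMeasure - r₂.toSignedMeasure := by
        apply Stmt15Aux.signed_ext_of_sInt_eq
        intro f
        have hw : Filter.Tendsto (fun k => sInt (μs (σ k)) f) Filter.atTop
            (nhds (sInt μlim f)) :=
          (hweak f).comp (hψ₁.comp hψ₂).tendsto_atTop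
        have hw2 : Filter.Tendsto (fun k => sInt (μs (σ k)) f) Filter.atTop
            (nhds ((∫ x, f x ∂r₁) - ∫ x, f x ∂r₂)) := by
          have := (hσp f).sub (hσn f)
          apply this.congr
          intro k
          rw [hsInt]
        have h1 := tendsto_nhds_unique hw hw2
        rw [h1, Stmt15Aux.sInt_sub_eq]
      have hmass : ∀ (m : Measure X) [IsFiniteMeasure m],
          ∫ x, (1 : C(X, ℝ)) x ∂m = (m Set.univ).toReal := by
        intro m _
        simp [measureReal_def]
      have htvt : Filter.Tendsto (fun k => tvNorm (μs (σ k))) Filter.atTop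
          (nhds ((r₁ Set.univ).toReal + (r₂ Set.univ).toReal)) := by
        have h1 := hσp 1
        have h2 := hσn 1
        rw [hmass r₁] at h1
        rw [hmass r₂] at h2
        have h3 := h1.add h2
        apply h3.congr
        intro k
        rw [hmass (p (σ k)), hmass (n (σ k))]
        exact (htveq (σ k)).symm
      have hubt : Filter.Tendsto (fun k => ‖ζ (σ k)‖ ^ 2 / (2 * lam (σ k)) + tvNorm ν)
          Filter.atTop (nhds (tvNorm ν)) := by
        have h1 : Filter.Tendsto (fun k => ‖ζ k‖ ^ 2 / (2 * lam k)) Filter.atTop (nhds 0) := by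
          have h2 := hrate.div_const 2
          rw [zero_div] at h2
          apply h2.congr
          intro k
          rw [div_div]
          ring_nf
        have hσmono : StrictMono σ := hφ.comp (hψ₁.comp hψ₂)
        have h3 := (h1.comp hσmono.tendsto_atTop).add_const (tvNorm ν)
        simpa using h3
      have hle : ∀ k, tvNorm (μs (σ k)) ≤ ‖ζ (σ k)‖ ^ 2 / (2 * lam (σ k)) + tvNorm ν :=
        fun k => hbound (σ k) ν hν
      have hlim_le : (r₁ Set.univ).toReal + (r₂ Set.univ).toReal ≤ tvNorm ν :=
        le_of_tendsto_of_tendsto' htvt hubt hle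
      calc tvNorm μlim = tvNorm (r₁.toSignedMeasure - r₂.toSignedMeasure) := by rw [hEq]
        _ ≤ (r₁ Set.univ).toReal + (r₂ Set.univ).toReal := Stmt15Aux.tvNorm_sub_le r₁ r₂
        _ ≤ tvNorm ν := hlim_le
end
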